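/- arXiv:1712.06363 — 3 statements merged into one kernel-verified Lean document; each statement's English description precedes it below -/
import Mathlib

section
/- Let X be a graph as in the context and fix a vertex x₀. Define the formal power series N(u:x₀) = Σ_{m=1}^{∞} N_m(x₀) u^m, B(u:x₀) = Σ_{m=1}^{∞} b_m(x₀) u^m where b_m(x₀) = c_m(x₀) for m = 1,2 and b_m(x₀) = c_m(x₀) − (deg(x₀)−2)·Σ_{j=1}^{⌈m/2⌉−1} c_{m−2j}(x₀) for m ≥ 3, and R(u:x₀) = Σ_{m=1}^{∞} R_m(x₀) u^m where R_m(x₀) = Σ_{i=1}^{⌈m/2⌉−1} i·(Δ_X c_{m−2i})(x₀). Then N(u:x₀) = B(u:x₀) + R(u:x₀). -/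
/-- A graph in the sense of Serre: an edge set with origin/terminus maps and a
fixed-point-free involution `bar` satisfying `o e = t (bar e)`.
Loops and multiple edges are allowed. -/
structure SerreGraph where
  V : Type
  E : Type
  o : E → V
  t : E → V
  bar : E → E
  bar_ne : ∀ e, bar e ≠ e
  bar_bar : ∀ e, bar (bar e) = e
  o_bar : ∀ e, o e = t (bar e)

namespace SerreGraph

variable (X : SerreGraph)

/-- The set of edges emanating from `x`. -/
def edgesAt (x : X.V) : Set X.E := {e | X.o e = x}

/-- The degree of a vertex. -/
noncomputable def deg (x : X.V) : ℕ := Nat.card (X.edgesAt x)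

/-- A sequence of `m` edges is a path when consecutive edges are composable. -/
def IsPath {m : ℕ} (p : Fin m → X.E) : Prop :=
  ∀ (i : ℕ) (h : i + 1 < m), X.t (p ⟨i, by omega⟩) = X.o (p ⟨i + 1, h⟩)

/-- No backtracking: no edge is followed by its reversal. -/
def NoBacktrack {m : ℕ} (p : Fin m → X.E) : Prop :=
  ∀ (i : ℕ) (h : i + 1 < m), p ⟨i + 1, h⟩ ≠ X.bar (p ⟨i, by omega⟩)

/-- A geodesic loop at `x`: a closed path starting and ending at `x` with no
backtracking. -/
def IsGeodesicLoopAt {m : ℕ} (x : X.V) (p : Fin m → X.E) : Prop :=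
  X.IsPath p ∧ X.NoBacktrack p ∧
    ∀ (h : 0 < m), X.o (p ⟨0, h⟩) = x ∧ X.t (p ⟨m - 1, by omega⟩) = x

/-- A path has a tail when its last edge is the reversal of its first edge. -/
def HasTail {m : ℕ} (p : Fin m → X.E) : Prop :=
  ∃ (h : 0 < m), p ⟨m - 1, by omega⟩ = X.bar (p ⟨0, h⟩)

/-- `c m x` is the number of geodesic loops of length `m` starting at `x`. -/
noncomputable def c (m : ℕ) (x : X.V) : ℕ :=
  Nat.card {p : Fin m → X.E // X.IsGeodesicLoopAt x p}

/-- `N m x` is the number of closed geodesics of length `m` starting at `x`,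
i.e. geodesic loops with no tail. -/
noncomputable def N (m : ℕ) (x : X.V) : ℕ :=
  Nat.card {p : Fin m → X.E // X.IsGeodesicLoopAt x p ∧ ¬ X.HasTail p}

/-- The formal combinatorial Laplacian applied to a function on vertices:
`(Δ f)(x) = deg(x)·f(x) − Σ_{e ∈ E_x} f(t(e))`. -/
noncomputable def lap (f : X.V → ℤ) (x : X.V) : ℤ :=
  (X.deg x : ℤ) * f x - ∑ᶠ e ∈ X.edgesAt x, f (X.t e)

/-- Connectedness: any two vertices are joined by a path. -/
def Connected : Prop :=
  ∀ x y : X.V, x = y ∨ ∃ (m : ℕ) (p : Fin m → X.E) (h : 0 < m),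
    X.IsPath p ∧ X.o (p ⟨0, h⟩) = x ∧ X.t (p ⟨m - 1, by omega⟩) = y

end SerreGraph

namespace SGAux

open SerreGraph Set

variable (X : SerreGraph)

lemma t_bar (e : X.E) : X.t (X.bar e) = X.o e := (X.o_bar e).symm

lemma o_bar' (e : X.E) : X.o (X.bar e) = X.t e := by
  have := X.o_bar (X.bar e); rwa [X.bar_bar] at this

lemma bar_inj : Function.Injective X.bar := fun a b h => by
  have := congrArg X.bar h; rwa [X.bar_bar, X.bar_bar] at this

/-- geodesic loops of length m at x, as a set. -/
def gl (m : ℕ) (x : X.V) : Set (Fin m → X.E) := {p | X.IsGeodesicLoopAt x p}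

/-- tailed geodesic loops. -/
def glt (m : ℕ) (x : X.V) : Set (Fin m → X.E) :=
  {p | X.IsGeodesicLoopAt x p ∧ X.HasTail p}

/-- tailless geodesic loops. -/
def gln (m : ℕ) (x : X.V) : Set (Fin m → X.E) :=
  {p | X.IsGeodesicLoopAt x p ∧ ¬ X.HasTail p}

variable {X}

lemma c_eq (m : ℕ) (x : X.V) : X.c m x = (gl X m x).ncard :=
  Nat.card_coe_set_eq _

lemma N_eq (m : ℕ) (x : X.V) : X.N m x = (gln X m x).ncard :=
  Nat.card_coe_set_eq _

variable (X) in
/-- number of tailed geodesic loops. -/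
noncomputable def tl (m : ℕ) (x : X.V) : ℕ := (glt X m x).ncard

variable (X) in
/-- paths of length m starting at x. -/
def pf (m : ℕ) (x : X.V) : Set (Fin m → X.E) :=
  {p | X.IsPath p ∧ ∀ h : 0 < m, X.o (p ⟨0, h⟩) = x}

variable (hfin : ∀ x : X.V, (X.edgesAt x).Finite)

include hfin in
lemma pf_finite : ∀ (m : ℕ) (x : X.V), (pf X m x).Finite := by
  intro m
  induction m with
  | zero =>
    intro x
    apply Set.Finite.subset (Set.finite_singleton (fun i : Fin 0 => (i.elim0 : X.E)))
    intro p _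
    simp only [Set.mem_singleton_iff]
    funext i; exact i.elim0
  | succ m ih =>
    intro x
    apply Set.Finite.of_finite_image (f := fun p : Fin (m+1) → X.E =>
      (p ⟨0, by omega⟩, fun i : Fin m => p i.succ))
    · apply Set.Finite.subset
        (Set.Finite.biUnion (hfin x) (fun e _ => (Set.finite_singleton e).prod (ih (X.t e))))
      rintro ⟨e, q⟩ ⟨p, ⟨hp, hx⟩, heq⟩
      obtain ⟨rfl, rfl⟩ := Prod.mk.injEq _ _ _ _ ▸ heq
      refine Set.mem_biUnion (show p ⟨0, by omega⟩ ∈ X.edgesAt x from hx (by omega)) ?_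
      refine ⟨rfl, ?_, ?_⟩
      · intro i h
        exact hp (i+1) (by omega)
      · intro h
        exact (hp 0 (by omega)).symm
    · rintro p ⟨hp, hxp⟩ q ⟨hq, hxq⟩ h
      simp only [Prod.mk.injEq] at h
      funext i
      rcases Nat.eq_zero_or_pos i.1 with h0 | h0
      · have : i = ⟨0, by omega⟩ := Fin.ext h0
        rw [this]; exact h.1
      · have : i = (⟨i.1 - 1, by omega⟩ : Fin m).succ := Fin.ext (by simp; omega)
        rw [this]
        exact congrFun h.2 ⟨i.1 - 1, by omega⟩

include hfin in
lemma gl_finite (m : ℕ) (x : X.V) : (gl X m x).Finite := by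
  apply Set.Finite.subset (pf_finite hfin m x)
  rintro p ⟨h1, _, h3⟩
  exact ⟨h1, fun h => (h3 h).1⟩

include hfin in
lemma glt_finite (m : ℕ) (x : X.V) : (glt X m x).Finite :=
  Set.Finite.subset (gl_finite hfin m x) (fun p hp => hp.1)

include hfin in
lemma gln_finite (m : ℕ) (x : X.V) : (gln X m x).Finite :=
  Set.Finite.subset (gl_finite hfin m x) (fun p hp => hp.1)

include hfin in
lemma c_split (m : ℕ) (x : X.V) : X.c m x = tl X m x + X.N m x := by
  rw [c_eq, N_eq, tl]
  rw [show gl X m x = glt X m x ∪ gln X m x by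
    ext p; simp only [gl, glt, gln, Set.mem_setOf_eq, Set.mem_union]; tauto]
  exact Set.ncard_union_eq (by
      rw [Set.disjoint_left]; rintro p ⟨_, h⟩ ⟨_, h'⟩; exact h' h)
    (glt_finite hfin m x) (gln_finite hfin m x)

lemma Tl_one (x : X.V) : tl X 1 x = 0 := by
  have h : glt X 1 x = ∅ := by
    ext p
    simp only [glt, Set.mem_setOf_eq, Set.mem_empty_iff_false, iff_false, not_and]
    rintro _ ⟨h, htail⟩
    exact X.bar_ne _ htail.symm
  rw [tl, h, Set.ncard_empty]

lemma Tl_two (x : X.V) : tl X 2 x = 0 := by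
  have h : glt X 2 x = ∅ := by
    ext p
    simp only [glt, Set.mem_setOf_eq, Set.mem_empty_iff_false, iff_false, not_and]
    rintro ⟨_, hnb, _⟩ ⟨h, htail⟩
    exact hnb 0 (by omega) htail
  rw [tl, h, Set.ncard_empty]

end SGAux

section Helpers

lemma pair_finite {α β : Type*} (A : Set α) (hA : A.Finite) (B : α → Set β)
    (hB : ∀ a, (B a).Finite) : {p : α × β | p.1 ∈ A ∧ p.2 ∈ B p.1}.Finite := by
  apply Set.Finite.subset (Set.Finite.biUnion hA (fun a _ => (Set.finite_singleton a).prod (hB a)))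
  rintro ⟨a, b⟩ ⟨ha, hb⟩
  exact Set.mem_biUnion ha ⟨rfl, hb⟩

lemma pair_ncard {α β : Type*} (A : Finset α) (B : α → Set β) (hB : ∀ a, (B a).Finite) :
    {p : α × β | p.1 ∈ A ∧ p.2 ∈ B p.1}.ncard = ∑ a ∈ A, (B a).ncard := by
  classical
  induction A using Finset.induction with
  | empty => simp
  | @insert a s ha ih =>
    have hset : {p : α × β | p.1 ∈ insert a s ∧ p.2 ∈ B p.1}
        = (Prod.mk a '' B a) ∪ {p : α × β | p.1 ∈ s ∧ p.2 ∈ B p.1} := by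
      ext ⟨u, v⟩
      simp only [Set.mem_setOf_eq, Finset.mem_insert, Set.mem_union, Set.mem_image]
      constructor
      · rintro ⟨rfl | hu, hv⟩
        · exact Or.inl ⟨v, hv, rfl⟩
        · exact Or.inr ⟨hu, hv⟩
      · rintro (⟨w, hw, heq⟩ | ⟨hu, hv⟩)
        · cases heq; exact ⟨Or.inl rfl, hw⟩
        · exact ⟨Or.inr hu, hv⟩
    have hinj : Function.Injective (Prod.mk a : β → α × β) := by
      intro u v h; simpa using congrArg Prod.snd h
    have hdisj : Disjoint (Prod.mk a '' B a) {p : α × β | p.1 ∈ s ∧ p.2 ∈ B p.1} := by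
      rw [Set.disjoint_left]
      rintro ⟨u, v⟩ ⟨w, hw, heq⟩ ⟨hu, _⟩
      cases heq; exact ha hu
    have hfin2 : {p : α × β | p.1 ∈ s ∧ p.2 ∈ B p.1}.Finite := by
      have := pair_finite (↑s : Set α) s.finite_toSet B hB
      convert this using 2
      simp only [Finset.mem_coe]
    rw [hset, Set.ncard_union_eq hdisj ((hB a).image _) hfin2, ih, Finset.sum_insert ha,
      Set.ncard_image_of_injective _ hinj]

lemma ncard_split {γ : Type*} (s : Set γ) (hs : s.Finite) (P Q : γ → Prop) :
    s.ncard = (s ∩ {a | ¬P a ∧ ¬Q a}).ncard + (s ∩ {a | P a ∧ ¬Q a}).ncard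
      + ((s ∩ {a | ¬P a ∧ Q a}).ncard + (s ∩ {a | P a ∧ Q a}).ncard) := by
  classical
  have key : ∀ (t : Set γ), t ⊆ s → t.ncard = (t ∩ {a | ¬ P a}).ncard + (t ∩ {a | P a}).ncard := by
    intro t hts
    have htf : t.Finite := hs.subset hts
    have h1 : t ∩ {a | ¬ P a} = t \ {a | P a} := by ext a; simp [Set.mem_diff]
    rw [h1, add_comm, Set.ncard_inter_add_ncard_diff_eq_ncard t _ htf]
  have h0 : s.ncard = (s ∩ {a | ¬ Q a}).ncard + (s ∩ {a | Q a}).ncard := by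
    have h1 : s ∩ {a | ¬ Q a} = s \ {a | Q a} := by ext a; simp [Set.mem_diff]
    rw [h1, add_comm, Set.ncard_inter_add_ncard_diff_eq_ncard s _ hs]
  rw [h0, key (s ∩ {a | ¬ Q a}) Set.inter_subset_left,
    key (s ∩ {a | Q a}) Set.inter_subset_left]
  have e1 : s ∩ {a | ¬ Q a} ∩ {a | ¬ P a} = s ∩ {a | ¬P a ∧ ¬Q a} := by
    ext a; simp [Set.mem_inter_iff]; tauto
  have e2 : s ∩ {a | ¬ Q a} ∩ {a | P a} = s ∩ {a | P a ∧ ¬Q a} := by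
    ext a; simp [Set.mem_inter_iff]; tauto
  have e3 : s ∩ {a | Q a} ∩ {a | ¬ P a} = s ∩ {a | ¬P a ∧ Q a} := by
    ext a; simp [Set.mem_inter_iff]; tauto
  have e4 : s ∩ {a | Q a} ∩ {a | P a} = s ∩ {a | P a ∧ Q a} := by
    ext a; simp [Set.mem_inter_iff]; tauto
  rw [e1, e2, e3, e4]

end Helpers

namespace SGAux

open SerreGraph

variable {X : SerreGraph}

/-- first and last entries of a nonempty tuple. -/
def fir {α : Type*} {n : ℕ} (q : Fin (n+1) → α) : α := q ⟨0, Nat.succ_pos n⟩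
def las {α : Type*} {n : ℕ} (q : Fin (n+1) → α) : α := q ⟨n, Nat.lt_succ_self n⟩

variable (X) in
/-- pairs of an edge at `x` and a geodesic loop of length `n+1` at its endpoint. -/
def Mset (n : ℕ) (x : X.V) : Set (X.E × (Fin (n+1) → X.E)) :=
  {p | p.1 ∈ X.edgesAt x ∧ X.IsGeodesicLoopAt (X.t p.1) p.2}

variable (X) in
def ext2 {n : ℕ} (pq : X.E × (Fin (n+1) → X.E)) : Fin (n+3) → X.E :=
  fun i => if h : (i : ℕ) = 0 then pq.1
    else if h' : (i : ℕ) ≤ n + 1 then pq.2 ⟨(i : ℕ) - 1, by omega⟩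
    else X.bar pq.1

lemma ext2_zero {n : ℕ} (pq : X.E × (Fin (n+1) → X.E)) (h : 0 < n+3) :
    ext2 X pq ⟨0, h⟩ = pq.1 := by
  simp [ext2]

lemma ext2_mid {n : ℕ} (pq : X.E × (Fin (n+1) → X.E)) (i : ℕ) (hi : i < n+1)
    (h : i + 1 < n+3) : ext2 X pq ⟨i+1, h⟩ = pq.2 ⟨i, hi⟩ := by
  show (if _ : i+1 = 0 then _ else if _ : i+1 ≤ n+1 then _ else _) = _
  rw [dif_neg (by omega), dif_pos (by omega)]
  rfl

lemma ext2_last {n : ℕ} (pq : X.E × (Fin (n+1) → X.E)) (h : n+2 < n+3) :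
    ext2 X pq ⟨n+2, h⟩ = X.bar pq.1 := by
  show (if _ : n+2 = 0 then _ else if _ : n+2 ≤ n+1 then _ else _) = _
  rw [dif_neg (by omega), dif_neg (by omega)]

def rotL {α : Type*} {n : ℕ} (q : Fin (n+1) → α) : Fin (n+1) → α :=
  fun i => if h : (i : ℕ) + 1 < n + 1 then q ⟨(i : ℕ) + 1, h⟩ else q ⟨0, Nat.succ_pos n⟩

def rotR {α : Type*} {n : ℕ} (q : Fin (n+1) → α) : Fin (n+1) → α :=
  fun i => if h : (i : ℕ) = 0 then q ⟨n, Nat.lt_succ_self n⟩ else q ⟨(i : ℕ) - 1, by omega⟩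

lemma rotL_lt {α : Type*} {n : ℕ} (q : Fin (n+1) → α) (i : ℕ) (hi : i + 1 < n+1)
    (h : i < n+1) : rotL q ⟨i, h⟩ = q ⟨i+1, hi⟩ := by
  show (if _ : i + 1 < n+1 then _ else _) = _
  rw [dif_pos hi]

lemma rotL_last {α : Type*} {n : ℕ} (q : Fin (n+1) → α) (h : n < n+1) :
    rotL q ⟨n, h⟩ = q ⟨0, Nat.succ_pos n⟩ := by
  show (if _ : n + 1 < n+1 then _ else _) = _
  rw [dif_neg (by omega)]

lemma rotR_zero {α : Type*} {n : ℕ} (q : Fin (n+1) → α) (h : 0 < n+1) :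
    rotR q ⟨0, h⟩ = q ⟨n, Nat.lt_succ_self n⟩ := by
  show (if _ : (0:ℕ) = 0 then _ else _) = _
  rw [dif_pos rfl]

lemma rotR_mid {α : Type*} {n : ℕ} (q : Fin (n+1) → α) (i : ℕ) (hi : i < n+1)
    (h : i + 1 < n+1) : rotR q ⟨i+1, h⟩ = q ⟨i, hi⟩ := by
  show (if _ : i + 1 = 0 then _ else _) = _
  rw [dif_neg (by omega)]
  rfl

lemma rotR_rotL {α : Type*} {n : ℕ} (q : Fin (n+1) → α) : rotR (rotL q) = q := by
  funext i
  rcases Nat.eq_zero_or_pos i.1 with h0 | h0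
  · have : i = ⟨0, Nat.succ_pos n⟩ := Fin.ext h0
    rw [this, rotR_zero, rotL_last]
  · obtain ⟨j, hj⟩ : ∃ j, i.1 = j + 1 := ⟨i.1 - 1, by omega⟩
    have : i = ⟨j+1, by omega⟩ := Fin.ext hj
    rw [this, rotR_mid _ j (by omega), rotL_lt _ j (by omega)]

lemma rotL_rotR {α : Type*} {n : ℕ} (q : Fin (n+1) → α) : rotL (rotR q) = q := by
  funext i
  rcases Nat.lt_or_ge i.1 n with h0 | h0
  · have : i = ⟨i.1, by omega⟩ := Fin.ext rfl
    rw [this, rotL_lt _ i.1 (by omega) (by omega), rotR_mid _ i.1 (by omega)]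
  · have hn : i.1 = n := by omega
    have : i = ⟨n, by omega⟩ := Fin.ext hn
    rw [this, rotL_last, rotR_zero]

def strip2 {α : Type*} {n : ℕ} (p : Fin (n+3) → α) : Fin (n+1) → α :=
  fun i => p ⟨(i : ℕ) + 1, by omega⟩

end SGAux

namespace SGAux

open SerreGraph

variable {X : SerreGraph}

variable (X) in
def M1 (n : ℕ) (x : X.V) : Set (X.E × (Fin (n+1) → X.E)) :=
  Mset X n x ∩ {p | ¬ (fir p.2 = X.bar p.1) ∧ ¬ (las p.2 = p.1)}

variable (X) in
def M2 (n : ℕ) (x : X.V) : Set (X.E × (Fin (n+1) → X.E)) :=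
  Mset X n x ∩ {p | (fir p.2 = X.bar p.1) ∧ ¬ (las p.2 = p.1)}

variable (X) in
def M3 (n : ℕ) (x : X.V) : Set (X.E × (Fin (n+1) → X.E)) :=
  Mset X n x ∩ {p | ¬ (fir p.2 = X.bar p.1) ∧ (las p.2 = p.1)}

variable (X) in
def M4 (n : ℕ) (x : X.V) : Set (X.E × (Fin (n+1) → X.E)) :=
  Mset X n x ∩ {p | (fir p.2 = X.bar p.1) ∧ (las p.2 = p.1)}

variable (hfin : ∀ x : X.V, (X.edgesAt x).Finite)

include hfin in
lemma Mset_finite (n : ℕ) (x : X.V) : (Mset X n x).Finite :=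
  pair_finite (X.edgesAt x) (hfin x) (fun e => gl X (n+1) (X.t e))
    (fun e => gl_finite hfin (n+1) (X.t e))

include hfin in
lemma ncard_Mset (n : ℕ) (x : X.V) :
    (Mset X n x).ncard = ∑ e ∈ (hfin x).toFinset, X.c (n+1) (X.t e) := by
  have h : Mset X n x = {p : X.E × (Fin (n+1) → X.E) |
      p.1 ∈ (hfin x).toFinset ∧ p.2 ∈ gl X (n+1) (X.t p.1)} := by
    ext p; simp [Mset, Set.Finite.mem_toFinset, gl]
  rw [h, pair_ncard _ _ (fun e => gl_finite hfin (n+1) (X.t e))]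
  exact Finset.sum_congr rfl (fun e _ => (c_eq (n+1) (X.t e)).symm)

include hfin in
lemma Mset_split (n : ℕ) (x : X.V) :
    (Mset X n x).ncard = (M1 X n x).ncard + (M2 X n x).ncard
      + ((M3 X n x).ncard + (M4 X n x).ncard) :=
  ncard_split (Mset X n x) (Mset_finite hfin n x)
    (fun p => fir p.2 = X.bar p.1) (fun p => las p.2 = p.1)

lemma ext2_inj {n : ℕ} : Function.Injective (ext2 X (n := n)) := by
  rintro ⟨e, q⟩ ⟨f, r⟩ h
  have h0 := congrFun h ⟨0, by omega⟩
  rw [ext2_zero, ext2_zero] at h0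
  simp only [Prod.mk.injEq]
  refine ⟨h0, funext fun i => ?_⟩
  have hi := congrFun h ⟨i.1 + 1, by omega⟩
  rw [ext2_mid _ i.1 i.2, ext2_mid _ i.1 i.2] at hi
  simpa using hi

/-- class 1 counts tailed loops of length `n+3`. -/
lemma ncard_M1 (n : ℕ) (x : X.V) : (M1 X n x).ncard = tl X (n+3) x := by
  have himg : glt X (n+3) x = ext2 X '' (M1 X n x) := by
    ext p
    constructor
    · rintro ⟨⟨hP, hB, hE⟩, hTl⟩
      obtain ⟨hpos, htail⟩ := hTl
      refine ⟨(p ⟨0, by omega⟩, strip2 p), ⟨⟨?_, ?_, ?_, ?_⟩, ?_, ?_⟩, ?_⟩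
      · exact (hE (by omega)).1
      · -- strip2 p is a path
        intro j hj
        show X.t (p ⟨j+1, by omega⟩) = X.o (p ⟨j+1+1, by omega⟩)
        exact hP (j+1) (by omega)
      · -- no backtrack
        intro j hj
        show p ⟨j+1+1, by omega⟩ ≠ X.bar (p ⟨j+1, by omega⟩)
        exact hB (j+1) (by omega)
      · -- endpoints
        intro h
        constructor
        · show X.o (p ⟨1, by omega⟩) = X.t (p ⟨0, by omega⟩)
          exact (hP 0 (by omega)).symm
        · show X.t (p ⟨n+1, by omega⟩) = X.t (p ⟨0, by omega⟩)
          have h1 : X.t (p ⟨n+1, by omega⟩) = X.o (p ⟨n+2, by omega⟩) := hP (n+1) (by omega)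
          have h2 : p ⟨n+2, by omega⟩ = X.bar (p ⟨0, by omega⟩) := htail
          rw [h1, h2, o_bar']
      · -- first of middle ≠ bar e
        show ¬ (p ⟨1, by omega⟩ = X.bar (p ⟨0, by omega⟩))
        exact hB 0 (by omega)
      · -- last of middle ≠ e
        show ¬ (p ⟨n+1, by omega⟩ = p ⟨0, by omega⟩)
        intro hcon
        have := hB (n+1) (by omega)
        apply this
        show p ⟨n+2, by omega⟩ = X.bar (p ⟨n+1, by omega⟩)
        rw [hcon]
        exact htail
      · -- ext2 of the pair is p
        funext i
        rcases Nat.eq_zero_or_pos i.1 with h0 | h0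
        · have : i = ⟨0, by omega⟩ := Fin.ext h0
          rw [this, ext2_zero]
        · rcases Nat.lt_or_ge i.1 (n+2) with h1 | h1
          · obtain ⟨j, hj⟩ : ∃ j, i.1 = j + 1 := ⟨i.1 - 1, by omega⟩
            have : i = ⟨j+1, by omega⟩ := Fin.ext hj
            rw [this, ext2_mid _ j (by omega)]
            rfl
          · have : i = ⟨n+2, by omega⟩ := Fin.ext (show i.1 = n+2 by omega)
            rw [this, ext2_last]
            exact htail.symm
    · rintro ⟨⟨e, q⟩, ⟨⟨he, hqP, hqB, hqE⟩, hP1, hQ1⟩, rfl⟩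
      have hq0 : X.o (q ⟨0, by omega⟩) = X.t e := (hqE (by omega)).1
      have hqn : X.t (q ⟨n, by omega⟩) = X.t e := (hqE (by omega)).2
      refine ⟨⟨?_, ?_, ?_⟩, ?_⟩
      · -- path
        intro i h
        rcases Nat.eq_zero_or_pos i with h0 | h0
        · subst h0
          show X.t (ext2 X (e, q) ⟨0, by omega⟩) = X.o (ext2 X (e, q) ⟨0+1, h⟩)
          rw [ext2_zero, ext2_mid _ 0 (by omega)]
          exact hq0.symm
        · obtain ⟨j, rfl⟩ : ∃ j, i = j + 1 := ⟨i - 1, by omega⟩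
          rcases Nat.lt_or_ge j n with h1 | h1
          · show X.t (ext2 X (e, q) ⟨j+1, by omega⟩) = X.o (ext2 X (e, q) ⟨j+1+1, h⟩)
            rw [ext2_mid _ j (by omega), ext2_mid _ (j+1) (by omega)]
            exact hqP j (by omega)
          · have hj : j = n := by omega
            subst hj
            show X.t (ext2 X (e, q) ⟨j+1, by omega⟩) = X.o (ext2 X (e, q) ⟨j+2, by omega⟩)
            rw [ext2_mid _ j (by omega), ext2_last, o_bar']
            exact hqn
      · -- no backtrack
        intro i h
        rcases Nat.eq_zero_or_pos i with h0 | h0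
        · subst h0
          show ext2 X (e, q) ⟨0+1, h⟩ ≠ X.bar (ext2 X (e, q) ⟨0, by omega⟩)
          rw [ext2_mid _ 0 (by omega), ext2_zero]
          exact hP1
        · obtain ⟨j, rfl⟩ : ∃ j, i = j + 1 := ⟨i - 1, by omega⟩
          rcases Nat.lt_or_ge j n with h1 | h1
          · show ext2 X (e, q) ⟨j+1+1, h⟩ ≠ X.bar (ext2 X (e, q) ⟨j+1, by omega⟩)
            rw [ext2_mid _ (j+1) (by omega), ext2_mid _ j (by omega)]
            exact hqB j (by omega)
          · have hj : j = n := by omega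
            subst hj
            show ext2 X (e, q) ⟨j+2, by omega⟩ ≠ X.bar (ext2 X (e, q) ⟨j+1, by omega⟩)
            rw [ext2_last, ext2_mid _ j (by omega)]
            intro hcon
            exact hQ1 (bar_inj X hcon).symm
      · -- endpoints
        intro h
        constructor
        · show X.o (ext2 X (e, q) ⟨0, by omega⟩) = x
          rw [ext2_zero]; exact he
        · show X.t (ext2 X (e, q) ⟨n+2, by omega⟩) = x
          rw [ext2_last, t_bar]; exact he
      · -- has tail
        refine ⟨by omega, ?_⟩
        show ext2 X (e, q) ⟨n+2, by omega⟩ = X.bar (ext2 X (e, q) ⟨0, by omega⟩)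
        rw [ext2_last, ext2_zero]
  rw [tl, himg, Set.ncard_image_of_injective _ ext2_inj]

end SGAux

namespace SGAux

open SerreGraph

variable {X : SerreGraph}

/-- class 2 counts tailless loops of length `n+1` (rotate left). -/
lemma ncard_M2 (n : ℕ) (x : X.V) : (M2 X n x).ncard = X.N (n+1) x := by
  have himg : gln X (n+1) x = (fun pq : X.E × (Fin (n+1) → X.E) => rotL pq.2) '' (M2 X n x) := by
    ext p
    constructor
    · rintro ⟨⟨hP, hB, hE⟩, hnt⟩
      have hE' := hE (by omega)
      refine ⟨(X.bar (las p), rotR p), ⟨⟨?_, ?_, ?_, ?_⟩, ?_, ?_⟩, rotL_rotR p⟩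
      · show X.o (X.bar (las p)) = x
        rw [o_bar']
        exact hE'.2
      · intro i h
        rcases Nat.eq_zero_or_pos i with h0 | h0
        · subst h0
          show X.t (rotR p ⟨0, by omega⟩) = X.o (rotR p ⟨0+1, h⟩)
          rw [rotR_zero, rotR_mid _ 0 (by omega)]
          rw [hE'.1]
          exact hE'.2
        · obtain ⟨j, rfl⟩ : ∃ j, i = j + 1 := ⟨i - 1, by omega⟩
          show X.t (rotR p ⟨j+1, by omega⟩) = X.o (rotR p ⟨j+1+1, h⟩)
          rw [rotR_mid _ j (by omega), rotR_mid _ (j+1) (by omega)]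
          exact hP j (by omega)
      · intro i h
        rcases Nat.eq_zero_or_pos i with h0 | h0
        · subst h0
          show rotR p ⟨0+1, h⟩ ≠ X.bar (rotR p ⟨0, by omega⟩)
          rw [rotR_mid _ 0 (by omega), rotR_zero]
          intro hcon
          exact hnt ⟨by omega, by rw [hcon, X.bar_bar]; rfl⟩
        · obtain ⟨j, rfl⟩ : ∃ j, i = j + 1 := ⟨i - 1, by omega⟩
          show rotR p ⟨j+1+1, h⟩ ≠ X.bar (rotR p ⟨j+1, by omega⟩)
          rw [rotR_mid _ (j+1) (by omega), rotR_mid _ j (by omega)]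
          exact hB j (by omega)
      · intro h
        constructor
        · show X.o (rotR p ⟨0, by omega⟩) = X.t (X.bar (las p))
          rw [rotR_zero, t_bar]
          rfl
        · show X.t (rotR p ⟨n, by omega⟩) = X.t (X.bar (las p))
          rw [t_bar]
          rcases Nat.eq_zero_or_pos n with h0 | h0
          · subst h0
            show X.t (rotR p ⟨0, by omega⟩) = X.o (las p)
            rw [rotR_zero]
            show X.t (p ⟨0, by omega⟩) = X.o (p ⟨0, by omega⟩)
            rw [hE'.1]
            exact hE'.2
          · obtain ⟨j, rfl⟩ : ∃ j, n = j + 1 := ⟨n - 1, by omega⟩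
            show X.t (rotR p ⟨j+1, by omega⟩) = X.o (las p)
            rw [rotR_mid _ j (by omega)]
            exact hP j (by omega)
      · show rotR p ⟨0, by omega⟩ = X.bar (X.bar (las p))
        rw [rotR_zero, X.bar_bar]
        rfl
      · show ¬ (rotR p ⟨n, by omega⟩ = X.bar (las p))
        rcases Nat.eq_zero_or_pos n with h0 | h0
        · subst h0
          rw [rotR_zero]
          intro hcon
          exact X.bar_ne _ hcon.symm
        · obtain ⟨j, rfl⟩ : ∃ j, n = j + 1 := ⟨n - 1, by omega⟩
          show ¬ (rotR p ⟨j+1, by omega⟩ = X.bar (las p))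
          rw [rotR_mid _ j (by omega)]
          intro hcon
          exact hB j (by omega) (by rw [hcon, X.bar_bar]; rfl)
    · rintro ⟨⟨e, q⟩, ⟨⟨he, hqP, hqB, hqE⟩, hfir, hlas⟩, rfl⟩
      have hq0 : X.o (q ⟨0, by omega⟩) = X.t e := (hqE (by omega)).1
      have hqn : X.t (q ⟨n, by omega⟩) = X.t e := (hqE (by omega)).2
      have hqP : X.IsPath q := hqP
      have hqB : X.NoBacktrack q := hqB
      have he : X.o e = x := he
      have hfir : q ⟨0, Nat.succ_pos n⟩ = X.bar e := hfir
      have hlas : ¬ (q ⟨n, Nat.lt_succ_self n⟩ = e) := hlas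
      refine ⟨⟨?_, ?_, ?_⟩, ?_⟩
      · intro i h
        rcases Nat.lt_or_ge (i+1) n with h1 | h1
        · show X.t (rotL q ⟨i, by omega⟩) = X.o (rotL q ⟨i+1, h⟩)
          rw [rotL_lt _ i (by omega), rotL_lt _ (i+1) (by omega)]
          exact hqP (i+1) (by omega)
        · have hi : i + 1 = n := by omega
          subst hi
          show X.t (rotL q ⟨i, by omega⟩) = X.o (rotL q ⟨i+1, h⟩)
          rw [rotL_lt _ i (by omega), rotL_last]
          rw [hqn, hq0]
      · intro i h
        rcases Nat.lt_or_ge (i+1) n with h1 | h1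
        · show rotL q ⟨i+1, h⟩ ≠ X.bar (rotL q ⟨i, by omega⟩)
          rw [rotL_lt _ (i+1) (by omega), rotL_lt _ i (by omega)]
          exact hqB (i+1) (by omega)
        · have hi : i + 1 = n := by omega
          subst hi
          show rotL q ⟨i+1, h⟩ ≠ X.bar (rotL q ⟨i, by omega⟩)
          rw [rotL_last, rotL_lt _ i (by omega)]
          intro hcon
          apply hlas
          show q ⟨i+1, Nat.lt_succ_self _⟩ = e
          have h2 : q ⟨i+1, Nat.lt_succ_self _⟩ = X.bar (q ⟨0, by omega⟩) := by
            rw [hcon, X.bar_bar]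
          rw [h2, hfir, X.bar_bar]
      · intro h
        constructor
        · show X.o (rotL q ⟨0, h⟩) = x
          rcases Nat.eq_zero_or_pos n with h0 | h0
          · subst h0
            rw [show rotL q ⟨0, h⟩ = q ⟨0, by omega⟩ from rotL_last q (by omega)]
            rw [hfir, o_bar']
            have h3 : X.t (X.bar e) = X.t e := by
              rw [← hfir]
              exact hqn
            rw [t_bar] at h3
            rw [← h3]
            exact he
          · obtain ⟨j, rfl⟩ : ∃ j, n = j + 1 := ⟨n - 1, by omega⟩
            rw [rotL_lt _ 0 (by omega)]
            rw [← hqP 0 (by omega), hfir, t_bar]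
            exact he
        · show X.t (rotL q ⟨n, by omega⟩) = x
          rw [rotL_last, hfir, t_bar]
          exact he
      · rintro ⟨h0, htail⟩
        have htail' : rotL q ⟨n+1-1, by omega⟩ = X.bar (rotL q ⟨0, h0⟩) := htail
        have h1 : rotL q ⟨n+1-1, by omega⟩ = q ⟨0, Nat.succ_pos n⟩ := rotL_last q (by omega)
        rw [h1] at htail'
        rcases Nat.eq_zero_or_pos n with hn0 | hn0
        · subst hn0
          have h2 : rotL q ⟨0, h0⟩ = q ⟨0, by omega⟩ := rotL_last q (by omega)
          rw [h2] at htail'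
          exact X.bar_ne _ htail'.symm
        · have h2 : rotL q ⟨0, h0⟩ = q ⟨0+1, by omega⟩ := rotL_lt q 0 (by omega) h0
          rw [h2] at htail'
          exact hqB 0 (by omega) (by rw [htail', X.bar_bar])
  have hinj : Set.InjOn (fun pq : X.E × (Fin (n+1) → X.E) => rotL pq.2) (M2 X n x) := by
    rintro ⟨e, q⟩ hm ⟨f, r⟩ hm' h
    have hqr : q = r := by
      have := congrArg rotR h
      rwa [rotR_rotL, rotR_rotL] at this
    subst hqr
    have h1 : X.bar e = X.bar f := by
      rw [← hm.2.1, ← hm'.2.1]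
    rw [bar_inj X h1]
  rw [N_eq, himg, Set.ncard_image_of_injOn hinj]

/-- class 3 counts tailless loops of length `n+1` (rotate right). -/
lemma ncard_M3 (n : ℕ) (x : X.V) : (M3 X n x).ncard = X.N (n+1) x := by
  have himg : gln X (n+1) x = (fun pq : X.E × (Fin (n+1) → X.E) => rotR pq.2) '' (M3 X n x) := by
    ext p
    constructor
    · rintro ⟨⟨hP, hB, hE⟩, hnt⟩
      have hE' := hE (by omega)
      refine ⟨(p ⟨0, by omega⟩, rotL p), ⟨⟨?_, ?_, ?_, ?_⟩, ?_, ?_⟩, rotR_rotL p⟩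
      · exact hE'.1
      · intro i h
        rcases Nat.lt_or_ge (i+1) n with h1 | h1
        · show X.t (rotL p ⟨i, by omega⟩) = X.o (rotL p ⟨i+1, h⟩)
          rw [rotL_lt _ i (by omega), rotL_lt _ (i+1) (by omega)]
          exact hP (i+1) (by omega)
        · have hi : i + 1 = n := by omega
          subst hi
          show X.t (rotL p ⟨i, by omega⟩) = X.o (rotL p ⟨i+1, h⟩)
          rw [rotL_lt _ i (by omega), rotL_last]
          have h2 : X.t (p ⟨i+1, by omega⟩) = x := hE'.2
          rw [h2, hE'.1]
      · intro i h
        rcases Nat.lt_or_ge (i+1) n with h1 | h1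
        · show rotL p ⟨i+1, h⟩ ≠ X.bar (rotL p ⟨i, by omega⟩)
          rw [rotL_lt _ (i+1) (by omega), rotL_lt _ i (by omega)]
          exact hB (i+1) (by omega)
        · have hi : i + 1 = n := by omega
          subst hi
          show rotL p ⟨i+1, h⟩ ≠ X.bar (rotL p ⟨i, by omega⟩)
          rw [rotL_last, rotL_lt _ i (by omega)]
          intro hcon
          exact hnt ⟨by omega, by rw [hcon, X.bar_bar]; rfl⟩
      · intro h
        constructor
        · show X.o (rotL p ⟨0, h⟩) = X.t (p ⟨0, by omega⟩)
          rcases Nat.eq_zero_or_pos n with h0 | h0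
          · subst h0
            rw [show rotL p ⟨0, h⟩ = p ⟨0, by omega⟩ from rotL_last p (by omega)]
            rw [hE'.1]
            exact hE'.2.symm
          · obtain ⟨j, rfl⟩ : ∃ j, n = j + 1 := ⟨n - 1, by omega⟩
            rw [rotL_lt _ 0 (by omega)]
            exact (hP 0 (by omega)).symm
        · show X.t (rotL p ⟨n, by omega⟩) = X.t (p ⟨0, by omega⟩)
          rw [rotL_last]
      · show ¬ (rotL p ⟨0, Nat.succ_pos n⟩ = X.bar (p ⟨0, by omega⟩))
        rcases Nat.eq_zero_or_pos n with h0 | h0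
        · subst h0
          rw [show rotL p ⟨0, Nat.succ_pos 0⟩ = p ⟨0, by omega⟩ from rotL_last p (by omega)]
          intro hcon
          exact X.bar_ne _ hcon.symm
        · rw [rotL_lt _ 0 (by omega)]
          exact hB 0 (by omega)
      · show rotL p ⟨n, Nat.lt_succ_self n⟩ = p ⟨0, by omega⟩
        rw [rotL_last]
    · rintro ⟨⟨e, q⟩, ⟨⟨he, hqP, hqB, hqE⟩, hfir, hlas⟩, rfl⟩
      have hq0 : X.o (q ⟨0, by omega⟩) = X.t e := (hqE (by omega)).1
      have hqn : X.t (q ⟨n, by omega⟩) = X.t e := (hqE (by omega)).2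
      have hqP : X.IsPath q := hqP
      have hqB : X.NoBacktrack q := hqB
      have he : X.o e = x := he
      have hfir : ¬ (q ⟨0, Nat.succ_pos n⟩ = X.bar e) := hfir
      have hlas' : q ⟨n, Nat.lt_succ_self n⟩ = e := hlas
      refine ⟨⟨?_, ?_, ?_⟩, ?_⟩
      · intro i h
        rcases Nat.eq_zero_or_pos i with h0 | h0
        · subst h0
          show X.t (rotR q ⟨0, by omega⟩) = X.o (rotR q ⟨0+1, h⟩)
          rw [rotR_zero, rotR_mid _ 0 (by omega), hqn, hq0]
        · obtain ⟨j, rfl⟩ : ∃ j, i = j + 1 := ⟨i - 1, by omega⟩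
          show X.t (rotR q ⟨j+1, by omega⟩) = X.o (rotR q ⟨j+1+1, h⟩)
          rw [rotR_mid _ j (by omega), rotR_mid _ (j+1) (by omega)]
          exact hqP j (by omega)
      · intro i h
        rcases Nat.eq_zero_or_pos i with h0 | h0
        · subst h0
          show rotR q ⟨0+1, h⟩ ≠ X.bar (rotR q ⟨0, by omega⟩)
          rw [rotR_mid _ 0 (by omega), rotR_zero]
          intro hcon
          apply hfir
          show q ⟨0, Nat.succ_pos n⟩ = X.bar e
          rw [hcon, ← hlas']
        · obtain ⟨j, rfl⟩ : ∃ j, i = j + 1 := ⟨i - 1, by omega⟩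
          show rotR q ⟨j+1+1, h⟩ ≠ X.bar (rotR q ⟨j+1, by omega⟩)
          rw [rotR_mid _ (j+1) (by omega), rotR_mid _ j (by omega)]
          exact hqB j (by omega)
      · intro h
        constructor
        · show X.o (rotR q ⟨0, h⟩) = x
          rw [rotR_zero, hlas']
          exact he
        · show X.t (rotR q ⟨n, by omega⟩) = x
          rcases Nat.eq_zero_or_pos n with h0 | h0
          · subst h0
            rw [rotR_zero, hlas']
            have h3 : X.o e = X.t e := by rw [← hq0, hlas']
            rw [← h3]
            exact he
          · obtain ⟨j, rfl⟩ : ∃ j, n = j + 1 := ⟨n - 1, by omega⟩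
            show X.t (rotR q ⟨j+1, by omega⟩) = x
            rw [rotR_mid _ j (by omega), hqP j (by omega), hlas']
            exact he
      · rintro ⟨h0, htail⟩
        have htail' : rotR q ⟨n+1-1, by omega⟩ = X.bar (rotR q ⟨0, h0⟩) := htail
        have h2 : rotR q ⟨0, h0⟩ = q ⟨n, Nat.lt_succ_self n⟩ := rotR_zero q h0
        rw [h2, hlas'] at htail'
        rcases Nat.eq_zero_or_pos n with hn0 | hn0
        · subst hn0
          have h1 : rotR q ⟨0+1-1, by omega⟩ = q ⟨0, Nat.lt_succ_self 0⟩ := rotR_zero q (by omega)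
          rw [h1, hlas'] at htail'
          exact X.bar_ne _ htail'.symm
        · obtain ⟨j, rfl⟩ : ∃ j, n = j + 1 := ⟨n - 1, by omega⟩
          have h1 : rotR q ⟨j+1+1-1, by omega⟩ = q ⟨j, by omega⟩ := rotR_mid q j (by omega) (by omega)
          rw [h1] at htail'
          exact hqB j (by omega) (by rw [hlas', htail', X.bar_bar])
  have hinj : Set.InjOn (fun pq : X.E × (Fin (n+1) → X.E) => rotR pq.2) (M3 X n x) := by
    rintro ⟨e, q⟩ hm ⟨f, r⟩ hm' h
    have hqr : q = r := by
      have := congrArg rotL h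
      rwa [rotL_rotR, rotL_rotR] at this
    subst hqr
    have h1 : las q = e := hm.2.2
    have h2 : las q = f := hm'.2.2
    rw [← h1, ← h2]
  rw [N_eq, himg, Set.ncard_image_of_injOn hinj]

end SGAux

namespace SGAux

open SerreGraph

variable {X : SerreGraph}

lemma M4_zero (x : X.V) : M4 X 0 x = ∅ := by
  ext ⟨e, q⟩
  simp only [M4, Set.mem_inter_iff, Set.mem_setOf_eq, Set.mem_empty_iff_false, iff_false]
  rintro ⟨_, hfir, hlas⟩
  have : X.bar e = e := by
    rw [← hfir]; exact hlas
  exact X.bar_ne e this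

lemma M4_one (x : X.V) : M4 X 1 x = ∅ := by
  ext ⟨e, q⟩
  simp only [M4, Set.mem_inter_iff, Set.mem_setOf_eq, Set.mem_empty_iff_false, iff_false]
  rintro ⟨⟨_, _, hqB, _⟩, hfir, hlas⟩
  apply hqB 0 (by omega)
  show q ⟨1, by omega⟩ = X.bar (q ⟨0, by omega⟩)
  have h1 : q ⟨0, Nat.succ_pos 1⟩ = X.bar e := hfir
  have h2 : q ⟨1, Nat.lt_succ_self 1⟩ = e := hlas
  rw [h1, X.bar_bar]
  exact h2

lemma strip2_ext2 {n : ℕ} (pq : X.E × (Fin (n+1) → X.E)) :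
    strip2 (ext2 X pq) = pq.2 := by
  funext i
  show ext2 X pq ⟨i.1+1, by omega⟩ = pq.2 i
  rw [ext2_mid _ i.1 i.2]

variable (hfin : ∀ x : X.V, (X.edgesAt x).Finite)

include hfin in
lemma ncard_M4 (k : ℕ) (x : X.V) :
    (M4 X (k+2) x).ncard + (tl X (k+1) x + 2 * X.N (k+1) x) = X.deg x * X.c (k+1) x := by
  classical
  set D : Set ((Fin (k+1) → X.E) × X.E) :=
    {sd | sd.1 ∈ gl X (k+1) x ∧ sd.2 ∈ X.edgesAt x \ {fir sd.1, X.bar (las sd.1)}} with hDdef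
  -- Step A : bijection between M4 and D
  have himg : D = (fun pq : X.E × (Fin (k+3) → X.E) => (strip2 pq.2, pq.1)) '' (M4 X (k+2) x) := by
    ext ⟨s, f⟩
    constructor
    · rintro ⟨hs, hf⟩
      obtain ⟨hsP, hsB, hsE⟩ := hs
      have hsE' := hsE (by omega)
      obtain ⟨hf1, hf2⟩ : f ≠ fir s ∧ f ≠ X.bar (las s) := by
        have := hf.2
        simpa [not_or] using this
      have hfo : X.o f = x := hf.1
      refine ⟨(f, ext2 X (X.bar f, s)), ⟨⟨hfo, ?_, ?_, ?_⟩, ?_, ?_⟩, ?_⟩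
      · -- path
        intro i h
        rcases Nat.eq_zero_or_pos i with h0 | h0
        · subst h0
          show X.t (ext2 X (X.bar f, s) ⟨0, by omega⟩) = X.o (ext2 X (X.bar f, s) ⟨0+1, h⟩)
          rw [ext2_zero, ext2_mid _ 0 (by omega)]
          show X.t (X.bar f) = X.o (s ⟨0, by omega⟩)
          rw [t_bar, hfo, hsE'.1]
        · obtain ⟨j, rfl⟩ : ∃ j, i = j + 1 := ⟨i - 1, by omega⟩
          rcases Nat.lt_or_ge j k with h1 | h1
          · show X.t (ext2 X (X.bar f, s) ⟨j+1, by omega⟩) =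
              X.o (ext2 X (X.bar f, s) ⟨j+1+1, h⟩)
            rw [ext2_mid _ j (by omega), ext2_mid _ (j+1) (by omega)]
            exact hsP j (by omega)
          · have hj : j = k := by omega
            subst hj
            show X.t (ext2 X (X.bar f, s) ⟨j+1, by omega⟩) =
              X.o (ext2 X (X.bar f, s) ⟨j+2, by omega⟩)
            rw [ext2_mid _ j (by omega), ext2_last]
            show X.t (s ⟨j, by omega⟩) = X.o (X.bar (X.bar f))
            rw [X.bar_bar, hfo]
            exact hsE'.2
      · -- no backtrack
        intro i h
        rcases Nat.eq_zero_or_pos i with h0 | h0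
        · subst h0
          show ext2 X (X.bar f, s) ⟨0+1, h⟩ ≠ X.bar (ext2 X (X.bar f, s) ⟨0, by omega⟩)
          rw [ext2_mid _ 0 (by omega), ext2_zero]
          show s ⟨0, by omega⟩ ≠ X.bar (X.bar f)
          rw [X.bar_bar]
          exact fun hcon => hf1 hcon.symm
        · obtain ⟨j, rfl⟩ : ∃ j, i = j + 1 := ⟨i - 1, by omega⟩
          rcases Nat.lt_or_ge j k with h1 | h1
          · show ext2 X (X.bar f, s) ⟨j+1+1, h⟩ ≠ X.bar (ext2 X (X.bar f, s) ⟨j+1, by omega⟩)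
            rw [ext2_mid _ (j+1) (by omega), ext2_mid _ j (by omega)]
            exact hsB j (by omega)
          · have hj : j = k := by omega
            subst hj
            show ext2 X (X.bar f, s) ⟨j+2, by omega⟩ ≠ X.bar (ext2 X (X.bar f, s) ⟨j+1, by omega⟩)
            rw [ext2_last, ext2_mid _ j (by omega)]
            show X.bar (X.bar f) ≠ X.bar (s ⟨j, by omega⟩)
            rw [X.bar_bar]
            exact hf2
      · -- endpoints
        intro h
        constructor
        · show X.o (ext2 X (X.bar f, s) ⟨0, by omega⟩) = X.t f
          rw [ext2_zero, o_bar']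
        · show X.t (ext2 X (X.bar f, s) ⟨k+2, by omega⟩) = X.t f
          rw [ext2_last, X.bar_bar]
      · -- fir = bar
        show ext2 X (X.bar f, s) ⟨0, by omega⟩ = X.bar f
        rw [ext2_zero]
      · -- las = f
        show ext2 X (X.bar f, s) ⟨k+2, by omega⟩ = f
        rw [ext2_last, X.bar_bar]
      · -- strip back
        show (strip2 (ext2 X (X.bar f, s)), f) = (s, f)
        rw [strip2_ext2]
    · rintro ⟨⟨e, q⟩, ⟨⟨he, hqP, hqB, hqE⟩, hfir, hlas⟩, heq⟩
      have hqP : X.IsPath q := hqP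
      have hqB : X.NoBacktrack q := hqB
      have he : X.o e = x := he
      have hfir : q ⟨0, Nat.succ_pos (k+2)⟩ = X.bar e := hfir
      have hlas : q ⟨k+2, Nat.lt_succ_self (k+2)⟩ = e := hlas
      obtain ⟨rfl, rfl⟩ : strip2 q = s ∧ e = f := by
        have h1 := congrArg Prod.fst heq
        have h2 := congrArg Prod.snd heq
        exact ⟨h1, h2⟩
      constructor
      · -- strip2 q is a loop at x
        refine ⟨?_, ?_, ?_⟩
        · intro j hj
          show X.t (q ⟨j+1, by omega⟩) = X.o (q ⟨j+1+1, by omega⟩)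
          exact hqP (j+1) (by omega)
        · intro j hj
          show q ⟨j+1+1, by omega⟩ ≠ X.bar (q ⟨j+1, by omega⟩)
          exact hqB (j+1) (by omega)
        · intro h
          constructor
          · show X.o (q ⟨0+1, by omega⟩) = x
            rw [← hqP 0 (by omega), hfir, t_bar]
            exact he
          · show X.t (q ⟨k+1, by omega⟩) = x
            rw [hqP (k+1) (by omega)]
            show X.o (q ⟨k+2, by omega⟩) = x
            rw [hlas]
            exact he
      · -- e avoids the two forbidden edges
        refine ⟨he, ?_⟩
        simp only [Set.mem_insert_iff, Set.mem_singleton_iff, not_or]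
        constructor
        · intro hcon
          apply hqB 0 (by omega)
          show q ⟨0+1, by omega⟩ = X.bar (q ⟨0, by omega⟩)
          rw [hfir, X.bar_bar]
          exact hcon.symm
        · intro hcon
          apply hqB (k+1) (by omega)
          show q ⟨k+1+1, by omega⟩ = X.bar (q ⟨k+1, by omega⟩)
          have h3 : q ⟨k+1+1, by omega⟩ = e := hlas
          rw [h3]
          exact hcon
  have hinj : Set.InjOn (fun pq : X.E × (Fin (k+3) → X.E) => (strip2 pq.2, pq.1))
      (M4 X (k+2) x) := by
    rintro ⟨e, q⟩ hm ⟨f, r⟩ hm' h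
    have hef : e = f := congrArg Prod.snd h
    subst hef
    have hstrip : strip2 q = strip2 r := congrArg Prod.fst h
    have hfq : q ⟨0, Nat.succ_pos (k+2)⟩ = X.bar e := hm.2.1
    have hfr : r ⟨0, Nat.succ_pos (k+2)⟩ = X.bar e := hm'.2.1
    have hlq : q ⟨k+2, Nat.lt_succ_self (k+2)⟩ = e := hm.2.2
    have hlr : r ⟨k+2, Nat.lt_succ_self (k+2)⟩ = e := hm'.2.2
    have : q = r := by
      funext i
      rcases Nat.eq_zero_or_pos i.1 with h0 | h0
      · have hi : i = ⟨0, by omega⟩ := Fin.ext h0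
        rw [hi]
        rw [show q ⟨0, by omega⟩ = X.bar e from hfq, show r ⟨0, by omega⟩ = X.bar e from hfr]
      · rcases Nat.lt_or_ge i.1 (k+2) with h1 | h1
        · obtain ⟨j, hj⟩ : ∃ j, i.1 = j + 1 := ⟨i.1 - 1, by omega⟩
          have hi : i = ⟨j+1, by omega⟩ := Fin.ext hj
          rw [hi]
          exact congrFun hstrip ⟨j, by omega⟩
        · have hi : i = ⟨k+2, by omega⟩ := Fin.ext (show i.1 = k+2 by omega)
          rw [hi]
          rw [show q ⟨k+2, by omega⟩ = e from hlq, show r ⟨k+2, by omega⟩ = e from hlr]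
    rw [this]
  -- Step B : count D fiberwise
  set A : Finset (Fin (k+1) → X.E) := (gl_finite hfin (k+1) x).toFinset with hA
  have hDcard : D.ncard = ∑ s ∈ A, (X.edgesAt x \ {fir s, X.bar (las s)}).ncard := by
    have hD2 : D = {p : (Fin (k+1) → X.E) × X.E |
        p.1 ∈ A ∧ p.2 ∈ X.edgesAt x \ {fir p.1, X.bar (las p.1)}} := by
      ext p
      simp [hDdef, hA, Set.Finite.mem_toFinset, gl]
    rw [hD2]
    exact pair_ncard A (fun s => X.edgesAt x \ {fir s, X.bar (las s)})
      (fun s => (hfin x).diff)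
  -- per-fiber count
  have hfiber : ∀ s ∈ A, (X.edgesAt x \ {fir s, X.bar (las s)}).ncard
      + ({fir s, X.bar (las s)} : Set X.E).ncard = X.deg x := by
    intro s hsA
    have hs : s ∈ gl X (k+1) x := (Set.Finite.mem_toFinset _).1 hsA
    obtain ⟨hsP, hsB, hsE⟩ := hs
    have hsE' := hsE (by omega)
    have hsub : ({fir s, X.bar (las s)} : Set X.E) ⊆ X.edgesAt x := by
      rintro a (rfl | rfl)
      · exact hsE'.1
      · show X.o (X.bar (las s)) = x
        rw [o_bar']
        exact hsE'.2
    have := Set.ncard_diff_add_ncard_of_subset hsub (hfin x)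
    rw [this]
    exact (Nat.card_coe_set_eq _).symm
  -- split by tail
  have hpaircard : ∀ s : Fin (k+1) → X.E,
      ({fir s, X.bar (las s)} : Set X.E).ncard = if X.HasTail s then 1 else 2 := by
    intro s
    by_cases ht : X.HasTail s
    · obtain ⟨_, htail⟩ := ht
      have : X.bar (las s) = fir s := by
        rw [show (las s : X.E) = X.bar (fir s) from htail, X.bar_bar]
      rw [this, if_pos ⟨Nat.succ_pos k, htail⟩]
      simp
    · rw [if_neg ht]
      apply Set.ncard_pair
      intro hcon
      apply ht
      refine ⟨Nat.succ_pos k, ?_⟩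
      show las s = X.bar (fir s)
      rw [hcon, X.bar_bar]
  have hM4D : (M4 X (k+2) x).ncard = D.ncard := by
    rw [himg, Set.ncard_image_of_injOn hinj]
  -- filters
  have hTl : (A.filter (fun s => X.HasTail s)).card = tl X (k+1) x := by
    rw [tl, ← Set.ncard_coe_finset]
    congr 1
    ext p
    simp [glt, hA, Set.Finite.mem_toFinset, gl]
  have hN : (A.filter (fun s => ¬ X.HasTail s)).card = X.N (k+1) x := by
    rw [N_eq, ← Set.ncard_coe_finset]
    congr 1
    ext p
    simp [gln, hA, Set.Finite.mem_toFinset, gl]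
  have hc : A.card = X.c (k+1) x := by
    rw [c_eq, ← Set.ncard_coe_finset]
    congr 1
    exact (Set.Finite.coe_toFinset _)
  -- assemble
  have hsum : (∑ s ∈ A, (X.edgesAt x \ {fir s, X.bar (las s)}).ncard)
      + (∑ s ∈ A, ({fir s, X.bar (las s)} : Set X.E).ncard) = X.deg x * X.c (k+1) x := by
    rw [← Finset.sum_add_distrib]
    rw [Finset.sum_congr rfl hfiber]
    rw [Finset.sum_const, hc, smul_eq_mul, mul_comm]
  have hpairsum : (∑ s ∈ A, ({fir s, X.bar (las s)} : Set X.E).ncard)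
      = tl X (k+1) x + 2 * X.N (k+1) x := by
    rw [Finset.sum_congr rfl (fun s _ => hpaircard s)]
    rw [← Finset.sum_filter_add_sum_filter_not A (fun s => X.HasTail s)]
    have h1 : ∑ s ∈ A.filter (fun s => X.HasTail s), (if X.HasTail s then 1 else 2)
        = (A.filter (fun s => X.HasTail s)).card := by
      rw [Finset.sum_congr rfl (fun s hs => if_pos (Finset.mem_filter.1 hs).2)]
      exact (Finset.card_eq_sum_ones _).symm
    have h2 : ∑ s ∈ A.filter (fun s => ¬ X.HasTail s), (if X.HasTail s then 1 else 2)
        = 2 * (A.filter (fun s => ¬ X.HasTail s)).card := by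
      rw [Finset.sum_congr rfl (fun s hs => if_neg (Finset.mem_filter.1 hs).2)]
      rw [Finset.sum_const, smul_eq_mul]
      omega
    rw [h1, h2, hTl, hN]
  rw [hM4D, hDcard, ← hpairsum]
  exact hsum

end SGAux

namespace SGAux

open SerreGraph

variable {X : SerreGraph}
variable (hfin : ∀ x : X.V, (X.edgesAt x).Finite)

include hfin in
/-- The master combinatorial identity. -/
lemma master (n : ℕ) (x : X.V) :
    ∑ e ∈ (hfin x).toFinset, X.c (n+1) (X.t e)
      = tl X (n+3) x + 2 * X.N (n+1) x + (M4 X n x).ncard := by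
  rw [← ncard_Mset hfin n x, Mset_split hfin n x, ncard_M1, ncard_M2, ncard_M3]
  omega

lemma sum_Icc_one (f : ℕ → ℤ) (K : ℕ) :
    ∑ i ∈ Finset.Icc 1 K, f i = ∑ i ∈ Finset.range K, f (i+1) := by
  induction K with
  | zero => simp
  | succ k ih =>
    rw [Finset.sum_Icc_succ_top (by omega), Finset.sum_range_succ, ih]

lemma sum_magic (u v : ℕ → ℤ) (k : ℕ) :
    ∑ i ∈ Finset.range (k+2), (u i + ((i : ℤ)+1) * v i)
      = (u 0 + v 0) - u 1
        + (2 * ∑ i ∈ Finset.range (k+1), (u (i+1) + ((i : ℤ)+1) * v (i+1))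
          - ∑ i ∈ Finset.range k, (u (i+2) + ((i : ℤ)+1) * v (i+2))) := by
  induction k with
  | zero =>
    simp [Finset.sum_range_succ]
    ring
  | succ k ih =>
    have hL : ∑ i ∈ Finset.range (k+1+2), (u i + ((i : ℤ)+1) * v i)
        = ∑ i ∈ Finset.range (k+2), (u i + ((i : ℤ)+1) * v i)
          + (u (k+2) + ((k+2 : ℕ) : ℤ) * v (k+2) + v (k+2)) := by
      rw [Finset.sum_range_succ (fun i => u i + ((i : ℤ)+1) * v i) (k+2)]
      push_cast
      ring
    have hR1 : ∑ i ∈ Finset.range (k+1+1), (u (i+1) + ((i : ℤ)+1) * v (i+1))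
        = ∑ i ∈ Finset.range (k+1), (u (i+1) + ((i : ℤ)+1) * v (i+1))
          + (u (k+2) + ((k+1 : ℕ) : ℤ) * v (k+2) + v (k+2)) := by
      rw [Finset.sum_range_succ (fun i => u (i+1) + ((i : ℤ)+1) * v (i+1)) (k+1)]
      push_cast
      ring
    have hR2 : ∑ i ∈ Finset.range (k+1), (u (i+2) + ((i : ℤ)+1) * v (i+2))
        = ∑ i ∈ Finset.range k, (u (i+2) + ((i : ℤ)+1) * v (i+2))
          + (u (k+2) + ((k : ℕ) : ℤ) * v (k+2) + v (k+2)) := by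
      rw [Finset.sum_range_succ (fun i => u (i+2) + ((i : ℤ)+1) * v (i+2)) k]
      push_cast
      ring
    rw [hL, hR1, hR2, ih]
    push_cast
    ring

/-- The tail-generating function, coefficientwise. -/
noncomputable def Ff (d : ℤ) (cc SZ : ℕ → ℤ) (m : ℕ) : ℤ :=
  ∑ i ∈ Finset.Icc 1 ((m+1)/2 - 1),
    ((d - 2) * cc (m - 2*i) - (i : ℤ) * (d * cc (m - 2*i) - SZ (m - 2*i)))

lemma Ff_rec (d : ℤ) (cc SZ : ℕ → ℤ) (m : ℕ) (hm : 5 ≤ m) :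
    Ff d cc SZ m = SZ (m-2) - 2 * cc (m-2) - (d-2) * cc (m-4)
      + 2 * Ff d cc SZ (m-2) - Ff d cc SZ (m-4) := by
  obtain ⟨k, hk⟩ : ∃ k, (m+1)/2 - 1 = k + 2 := ⟨(m+1)/2 - 3, by omega⟩
  set u : ℕ → ℤ := fun i => (d - 2) * cc (m - 2*(i+1)) with hu
  set v : ℕ → ℤ := fun i => SZ (m - 2*(i+1)) - d * cc (m - 2*(i+1)) with hv
  have hFm : Ff d cc SZ m = ∑ i ∈ Finset.range (k+2), (u i + ((i : ℤ)+1) * v i) := by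
    rw [Ff, sum_Icc_one, hk]
    refine Finset.sum_congr rfl (fun i _ => ?_)
    rw [hu, hv]
    push_cast
    ring
  have hFm2 : Ff d cc SZ (m-2)
      = ∑ i ∈ Finset.range (k+1), (u (i+1) + ((i : ℤ)+1) * v (i+1)) := by
    rw [Ff, sum_Icc_one, show (m-2+1)/2 - 1 = k+1 from by omega]
    refine Finset.sum_congr rfl (fun i _ => ?_)
    rw [hu, hv]
    have harg : m - 2 - 2*(i+1) = m - 2*(i+1+1) := by omega
    rw [harg]
    push_cast
    ring
  have hFm4 : Ff d cc SZ (m-4)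
      = ∑ i ∈ Finset.range k, (u (i+2) + ((i : ℤ)+1) * v (i+2)) := by
    rw [Ff, sum_Icc_one, show (m-4+1)/2 - 1 = k from by omega]
    refine Finset.sum_congr rfl (fun i _ => ?_)
    rw [hu, hv]
    have harg : m - 4 - 2*(i+1) = m - 2*(i+2+1) := by omega
    rw [harg]
    push_cast
    ring
  rw [hFm, hFm2, hFm4, sum_magic u v k, hu, hv]
  simp only
  rw [show m - 2*(0+1) = m - 2 from by omega, show m - 2*(1+1) = m - 4 from by omega]
  ring

include hfin in
/-- The key induction: number of tailed loops equals `Ff`. -/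
lemma tl_eq (x : X.V) : ∀ m : ℕ, 1 ≤ m →
    (tl X m x : ℤ) = Ff (X.deg x) (fun j => (X.c j x : ℤ))
      (fun j => ∑ e ∈ (hfin x).toFinset, (X.c j (X.t e) : ℤ)) m := by
  set d : ℤ := (X.deg x : ℤ) with hd
  set cc : ℕ → ℤ := fun j => (X.c j x : ℤ) with hcc
  set SZ : ℕ → ℤ := fun j => ∑ e ∈ (hfin x).toFinset, (X.c j (X.t e) : ℤ) with hSZ
  intro m
  induction m using Nat.strong_induction_on with
  | _ m ih =>
    intro hm
    have hSZcast : ∀ j : ℕ, ((∑ e ∈ (hfin x).toFinset, X.c j (X.t e) : ℕ) : ℤ) = SZ j := by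
      intro j
      rw [hSZ]
      push_cast
      rfl
    match m, hm with
    | 1, _ =>
      rw [Tl_one, Ff, show (1+1)/2 - 1 = 0 from by omega,
        Finset.Icc_eq_empty (by omega), Finset.sum_empty]
      rfl
    | 2, _ =>
      rw [Tl_two, Ff, show (2+1)/2 - 1 = 0 from by omega,
        Finset.Icc_eq_empty (by omega), Finset.sum_empty]
      rfl
    | 3, _ =>
      have hma := master hfin 0 x
      rw [M4_zero, Set.ncard_empty] at hma
      have hc1 := c_split hfin 1 x
      rw [Tl_one] at hc1
      have hma' : SZ 1 = (tl X 3 x : ℤ) + 2 * (X.N 1 x : ℤ) := by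
        rw [← hSZcast 1]
        exact_mod_cast hma
      have hc1' : cc 1 = (X.N 1 x : ℤ) := by
        show (X.c 1 x : ℤ) = (X.N 1 x : ℤ)
        exact_mod_cast hc1.trans (by omega)
      rw [Ff, show (3+1)/2 - 1 = 1 from by omega, Finset.Icc_self, Finset.sum_singleton]
      rw [show 3 - 2*1 = 1 from by omega]
      push_cast
      linarith
    | 4, _ =>
      have hma := master hfin 1 x
      rw [M4_one, Set.ncard_empty] at hma
      have hc2 := c_split hfin 2 x
      rw [Tl_two] at hc2
      have hma' : SZ 2 = (tl X 4 x : ℤ) + 2 * (X.N 2 x : ℤ) := by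
        rw [← hSZcast 2]
        exact_mod_cast hma
      have hc2' : cc 2 = (X.N 2 x : ℤ) := by
        show (X.c 2 x : ℤ) = (X.N 2 x : ℤ)
        exact_mod_cast hc2.trans (by omega)
      rw [Ff, show (4+1)/2 - 1 = 1 from by omega, Finset.Icc_self, Finset.sum_singleton]
      rw [show 4 - 2*1 = 2 from by omega]
      push_cast
      linarith
    | (m+5), _ =>
      have ih2 := ih (m+3) (by omega) (by omega)
      have ih4 := ih (m+1) (by omega) (by omega)
      have hma := master hfin (m+2) x
      have hM4 := ncard_M4 hfin m x
      have hcs3 := c_split hfin (m+3) x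
      have hcs1 := c_split hfin (m+1) x
      have hrec : Ff d cc SZ (m+5) = SZ (m+3) - 2 * cc (m+3) - (d-2) * cc (m+1)
          + 2 * Ff d cc SZ (m+3) - Ff d cc SZ (m+1) :=
        Ff_rec d cc SZ (m+5) (by omega)
      have hma' : SZ (m+3) = (tl X (m+5) x : ℤ) + 2 * (X.N (m+3) x : ℤ)
          + ((M4 X (m+2) x).ncard : ℤ) := by
        rw [← hSZcast (m+3)]
        exact_mod_cast hma
      have hM4' : ((M4 X (m+2) x).ncard : ℤ) + ((tl X (m+1) x : ℤ) + 2 * (X.N (m+1) x : ℤ))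
          = d * cc (m+1) := by
        show _ = (X.deg x : ℤ) * (X.c (m+1) x : ℤ)
        exact_mod_cast hM4
      have hcs3' : cc (m+3) = (tl X (m+3) x : ℤ) + (X.N (m+3) x : ℤ) := by
        show (X.c (m+3) x : ℤ) = _
        exact_mod_cast hcs3
      have hcs1' : cc (m+1) = (tl X (m+1) x : ℤ) + (X.N (m+1) x : ℤ) := by
        show (X.c (m+1) x : ℤ) = _
        exact_mod_cast hcs1
      rw [hrec, ← ih2, ← ih4]
      linarith

end SGAux

/-- With `b_m`, `R_m` as in the paper, in `ℚ[[u]]`: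
`N(u:x₀) = B(u:x₀) + R(u:x₀)`. -/
theorem N_eq_B_add_R (X : SerreGraph) [Countable X.V]
    (hconn : X.Connected)
    (hfin : ∀ x : X.V, (X.edgesAt x).Finite)
    (hbd : ∃ M : ℕ, ∀ x : X.V, X.deg x ≤ M)
    (hdeg1 : ∀ x : X.V, X.deg x ≠ 1)
    (x₀ : X.V)
    (b R : ℕ → ℤ)
    (hb_small : ∀ m : ℕ, m ≤ 2 → b m = (X.c m x₀ : ℤ))
    (hb : ∀ m : ℕ, 3 ≤ m → b m = (X.c m x₀ : ℤ) -
      ((X.deg x₀ : ℤ) - 2) * ∑ j ∈ Finset.Icc 1 ((m + 1) / 2 - 1), (X.c (m - 2 * j) x₀ : ℤ))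
    (hR : ∀ m : ℕ, R m = ∑ i ∈ Finset.Icc 1 ((m + 1) / 2 - 1),
      (i : ℤ) * X.lap (fun x => (X.c (m - 2 * i) x : ℤ)) x₀) :
    PowerSeries.mk (fun m : ℕ => if m = 0 then (0 : ℚ) else (X.N m x₀ : ℚ)) =
      PowerSeries.mk (fun m : ℕ => if m = 0 then (0 : ℚ) else (b m : ℚ)) +
        PowerSeries.mk (fun m : ℕ => if m = 0 then (0 : ℚ) else (R m : ℚ)) := by
  classical
  have hlap : ∀ j : ℕ, X.lap (fun y => (X.c j y : ℤ)) x₀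
      = (X.deg x₀ : ℤ) * (X.c j x₀ : ℤ)
        - ∑ e ∈ (hfin x₀).toFinset, (X.c j (X.t e) : ℤ) := by
    intro j
    rw [SerreGraph.lap]
    congr 1
    exact finsum_mem_eq_finite_toFinset_sum _ (hfin x₀)
  have key : ∀ m : ℕ, 1 ≤ m → (X.N m x₀ : ℤ) = b m + R m := by
    intro m hm
    have hNc : (X.c m x₀ : ℤ) = (SGAux.tl X m x₀ : ℤ) + (X.N m x₀ : ℤ) := by
      exact_mod_cast SGAux.c_split hfin m x₀
    rcases Nat.lt_or_ge m 3 with h3 | h3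
    · have hRm : R m = 0 := by
        rw [hR m, show (m+1)/2 - 1 = 0 from by omega, Finset.Icc_eq_empty (by omega),
          Finset.sum_empty]
      have hbm : b m = (X.c m x₀ : ℤ) := hb_small m (by omega)
      have htl : SGAux.tl X m x₀ = 0 := by
        interval_cases m
        · exact SGAux.Tl_one x₀
        · exact SGAux.Tl_two x₀
      rw [hRm, hbm, add_zero]
      rw [htl] at hNc
      push_cast at hNc
      linarith
    · have htl := SGAux.tl_eq hfin x₀ m (by omega)
      have hFf : SGAux.Ff (X.deg x₀ : ℤ) (fun j => (X.c j x₀ : ℤ))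
          (fun j => ∑ e ∈ (hfin x₀).toFinset, (X.c j (X.t e) : ℤ)) m
          = ((X.deg x₀ : ℤ) - 2) * (∑ j ∈ Finset.Icc 1 ((m + 1) / 2 - 1), (X.c (m - 2 * j) x₀ : ℤ))
            - ∑ i ∈ Finset.Icc 1 ((m + 1) / 2 - 1),
                (i : ℤ) * X.lap (fun x => (X.c (m - 2 * i) x : ℤ)) x₀ := by
        rw [SGAux.Ff, Finset.sum_sub_distrib]
        congr 1
        · rw [Finset.mul_sum]
        · refine Finset.sum_congr rfl (fun i _ => ?_)
          rw [hlap (m - 2 * i)]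
      rw [hb m h3, hR m]
      linarith [hNc, htl, hFf]
  apply PowerSeries.ext
  intro n
  rw [map_add, PowerSeries.coeff_mk, PowerSeries.coeff_mk, PowerSeries.coeff_mk]
  by_cases h0 : n = 0
  · simp [h0]
  · simp only [h0, if_false]
    have := key n (by omega)
    exact_mod_cast this
end

section
/- Let X be a simple graph as in the context and let α = (M + √(M² + 4M))/2. Then for every integer m ≥ 0, the operator norm of C_m satisfies ‖C_m‖ ≤ α^m. -/
noncomputable section

/-- The Hilbert space `ℓ²(V)` of square-summable complex functions on `V`. -/
abbrev ℓ2 (V : Type) : Type := lp (fun _ : V => ℂ) 2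

namespace SimpleGraph

variable {V : Type} (G : SimpleGraph V)

/-- The degree of a vertex. -/
def gdeg (v : V) : ℕ := Nat.card (G.neighborSet v)

/-- A geodesic (non-backtracking) path of length `m` in a simple graph,
encoded as its sequence of `m + 1` vertices. -/
def IsGeoPath {m : ℕ} (p : Fin (m + 1) → V) : Prop :=
  (∀ (i : ℕ) (h : i + 1 < m + 1), G.Adj (p ⟨i, by omega⟩) (p ⟨i + 1, h⟩)) ∧
  (∀ (i : ℕ) (h : i + 2 < m + 1), p ⟨i + 2, h⟩ ≠ p ⟨i, by omega⟩)

/-- The number of geodesic loops (closed non-backtracking paths) of length `m`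
at `x`. -/
def cLoop (m : ℕ) (x : V) : ℕ :=
  Nat.card {p : Fin (m + 1) → V // G.IsGeoPath p ∧ p 0 = x ∧ p (Fin.last m) = x}

/-- The formal combinatorial Laplacian applied to `cLoop m`:
`(Δ_X c_m)(x) = deg(x)·c_m(x) − Σ_{y ∼ x} c_m(y)`. -/
def lapc (m : ℕ) (x : V) : ℤ :=
  (G.gdeg x : ℤ) * G.cLoop m x - ∑ᶠ y ∈ G.neighborSet x, (G.cLoop m y : ℤ)

/-- The defining property of the geodesic-path-counting operators `C_m` on
`ℓ²(V)`: `(C_m f)(x) = Σ_c f(t(c))`, the sum over all geodesic paths `c` of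
length `m` starting at `x` (so `C₀ = I` and `C₁ = A_X`). -/
def IsGeoCountOp (C : ℕ → (ℓ2 V →L[ℂ] ℓ2 V)) : Prop :=
  ∀ (m : ℕ) (f : ℓ2 V) (x : V),
    C m f x =
      ∑ᶠ p : {p : Fin (m + 1) → V // G.IsGeoPath p ∧ p 0 = x}, f (p.1 (Fin.last m))

/-- The defining property of the adjacency operator on `ℓ²(V)`:
`(A f)(x) = Σ_{y ∼ x} f(y)`. -/
def IsAdjOp (A : ℓ2 V →L[ℂ] ℓ2 V) : Prop :=
  ∀ (f : ℓ2 V) (x : V), A f x = ∑ᶠ y ∈ G.neighborSet x, f y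

/-- The defining property of the valency operator on `ℓ²(V)`:
`(D f)(x) = deg(x)·f(x)`. -/
def IsValOp (D : ℓ2 V →L[ℂ] ℓ2 V) : Prop :=
  ∀ (f : ℓ2 V) (x : V), D f x = (G.gdeg x : ℂ) * f x

end SimpleGraph

/- ### Auxiliary material for the proof -/

open scoped ENNReal

namespace CNB

open SimpleGraph

variable {V : Type} {G : SimpleGraph V} {M : ℕ}

lemma neighbor_embed {v : V} (hfin : (G.neighborSet v).Finite) (h : G.gdeg v ≤ M) :
    Nonempty (G.neighborSet v ↪ Fin M) := by
  haveI := hfin.fintype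
  have hcard : Fintype.card (G.neighborSet v) ≤ M := by
    rwa [SimpleGraph.gdeg, Nat.card_eq_fintype_card] at h
  exact ⟨(Fintype.equivFin _).toEmbedding.trans (Fin.castLEEmb hcard)⟩

lemma embed_eq (ι : ∀ v : V, G.neighborSet v ↪ Fin M) {v w : V} (hvw : v = w)
    (a : G.neighborSet v) (b : G.neighborSet w)
    (h : ι v a = (ι w b : Fin M)) : (a : V) = (b : V) := by
  subst hvw
  exact congrArg Subtype.val ((ι v).injective h)

lemma exists_inj_pathsFrom (ι : ∀ v : V, G.neighborSet v ↪ Fin M) (m : ℕ) (x : V) :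
    ∃ F : {p : Fin (m + 1) → V // G.IsGeoPath p ∧ p 0 = x} → (Fin m → Fin M),
      Function.Injective F := by
  refine ⟨fun p i => ι (p.1 ⟨i.1, by omega⟩)
    ⟨p.1 ⟨i.1 + 1, by omega⟩, p.2.1.1 i.1 (by omega)⟩, ?_⟩
  intro p q h
  apply Subtype.ext
  funext j
  obtain ⟨j, hj⟩ := j
  induction j with
  | zero =>
    have h0 : (⟨0, hj⟩ : Fin (m + 1)) = 0 := rfl
    rw [h0, p.2.2, q.2.2]
  | succ k ih =>
    have hk : k < m + 1 := by omega
    have e : p.1 ⟨k, hk⟩ = q.1 ⟨k, hk⟩ := ih hk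
    have hcode := congrFun h ⟨k, by omega⟩
    exact embed_eq ι e _ _ hcode

lemma isGeoPath_rev {m : ℕ} {p : Fin (m + 1) → V} (hp : G.IsGeoPath p) :
    G.IsGeoPath (fun i => p i.rev) := by
  constructor
  · intro i h
    have e1 : (⟨i, by omega⟩ : Fin (m + 1)).rev = ⟨m - i - 1 + 1, by omega⟩ := by
      ext; simp [Fin.val_rev]; omega
    have e2 : (⟨i + 1, h⟩ : Fin (m + 1)).rev = ⟨m - i - 1, by omega⟩ := by
      ext; simp [Fin.val_rev]; omega
    simp only [e1, e2]
    exact (hp.1 (m - i - 1) (by omega)).symm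
  · intro i h
    have e1 : (⟨i, by omega⟩ : Fin (m + 1)).rev = ⟨m - i - 2 + 2, by omega⟩ := by
      ext; simp [Fin.val_rev]; omega
    have e2 : (⟨i + 2, h⟩ : Fin (m + 1)).rev = ⟨m - i - 2, by omega⟩ := by
      ext; simp [Fin.val_rev]; omega
    simp only [e1, e2]
    exact (hp.2 (m - i - 2) (by omega)).symm

lemma exists_inj_pathsTo (m : ℕ) (y : V) :
    ∃ F : {p : Fin (m + 1) → V // G.IsGeoPath p ∧ p (Fin.last m) = y} →
      {p : Fin (m + 1) → V // G.IsGeoPath p ∧ p 0 = y}, Function.Injective F := by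
  have h0 : (0 : Fin (m + 1)).rev = Fin.last m := by ext; simp [Fin.val_rev]
  refine ⟨fun p => ⟨fun i => p.1 i.rev, isGeoPath_rev p.2.1,
    by show p.1 (0 : Fin (m + 1)).rev = y; rw [h0, p.2.2]⟩, ?_⟩
  intro p q h
  apply Subtype.ext
  funext j
  have := congrFun (congrArg Subtype.val h) j.rev
  simpa [Fin.rev_rev] using this

lemma l2_tsum_sq (h : ℓ2 V) :
    ∑' x, ENNReal.ofReal (‖h x‖ ^ 2) = ENNReal.ofReal (‖h‖ ^ 2) := by
  have hm := lp.memℓp h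
  have h2 : (0 : ℝ) < (2 : ℝ≥0∞).toReal := by norm_num
  have e : ∀ x : V, ‖h x‖ ^ (2 : ℝ≥0∞).toReal = ‖h x‖ ^ 2 := by
    intro x
    rw [ENNReal.toReal_ofNat, show ((2:ℝ)) = ((2:ℕ):ℝ) by norm_num, Real.rpow_natCast]
  have hsum : Summable fun x => ‖h x‖ ^ 2 := by
    have := (memℓp_gen_iff h2).1 hm
    simpa [e] using this
  have hnorm : ‖h‖ ^ 2 = ∑' x, ‖h x‖ ^ 2 := by
    have := lp.norm_rpow_eq_tsum h2 h
    have e' : ‖h‖ ^ (2 : ℝ≥0∞).toReal = ‖h‖ ^ 2 := by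
      rw [ENNReal.toReal_ofNat, show ((2:ℝ)) = ((2:ℕ):ℝ) by norm_num, Real.rpow_natCast]
    rw [← e', this]
    exact tsum_congr e
  rw [hnorm, ENNReal.ofReal_tsum_of_nonneg (fun x => sq_nonneg _) hsum]


section Analysis


lemma step_bound (m : ℕ) {M : ℕ} (f : ℓ2 V) (x : V)
    [Fintype {p : Fin (m + 1) → V // G.IsGeoPath p ∧ p 0 = x}]
    (hcard : Nat.card {p : Fin (m + 1) → V // G.IsGeoPath p ∧ p 0 = x} ≤ M ^ m)
    (z : ℂ)
    (hz : z = ∑ p : {p : Fin (m + 1) → V // G.IsGeoPath p ∧ p 0 = x}, f (p.1 (Fin.last m))) :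
    ENNReal.ofReal (‖z‖ ^ 2) ≤ ((M ^ m : ℕ) : ℝ≥0∞) *
      ∑' p : {p : Fin (m + 1) → V // G.IsGeoPath p ∧ p 0 = x},
        ENNReal.ofReal (‖f (p.1 (Fin.last m))‖ ^ 2) := by
  have h1 : ‖z‖ ≤ ∑ p : {p : Fin (m + 1) → V // G.IsGeoPath p ∧ p 0 = x},
      ‖f (p.1 (Fin.last m))‖ := by
    rw [hz]; exact norm_sum_le _ _
  have h2 : ‖z‖ ^ 2 ≤ ((M ^ m : ℕ) : ℝ) *
      ∑ p : {p : Fin (m + 1) → V // G.IsGeoPath p ∧ p 0 = x},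
        ‖f (p.1 (Fin.last m))‖ ^ 2 := by
    have hS2 : (0 : ℝ) ≤ ∑ p : {p : Fin (m + 1) → V // G.IsGeoPath p ∧ p 0 = x},
        ‖f (p.1 (Fin.last m))‖ ^ 2 := by positivity
    have hcs : (∑ p : {p : Fin (m + 1) → V // G.IsGeoPath p ∧ p 0 = x},
          ‖f (p.1 (Fin.last m))‖) ^ 2 ≤
        ((Finset.univ : Finset {p : Fin (m + 1) → V // G.IsGeoPath p ∧ p 0 = x}).card : ℝ) *
          ∑ p : {p : Fin (m + 1) → V // G.IsGeoPath p ∧ p 0 = x},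
            ‖f (p.1 (Fin.last m))‖ ^ 2 := sq_sum_le_card_mul_sum_sq
    have hcard' : ((Finset.univ : Finset
        {p : Fin (m + 1) → V // G.IsGeoPath p ∧ p 0 = x}).card : ℝ) ≤ ((M ^ m : ℕ) : ℝ) := by
      rw [Nat.card_eq_fintype_card] at hcard
      exact_mod_cast (by simpa [Finset.card_univ] using hcard : Finset.univ.card ≤ M ^ m)
    have h2a : ‖z‖ ^ 2 ≤ (∑ p : {p : Fin (m + 1) → V // G.IsGeoPath p ∧ p 0 = x},
        ‖f (p.1 (Fin.last m))‖) ^ 2 := pow_le_pow_left₀ (norm_nonneg _) h1 2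
    have h2b := mul_le_mul_of_nonneg_right hcard' hS2
    linarith
  have h3 : ENNReal.ofReal (((M ^ m : ℕ) : ℝ) *
      ∑ p : {p : Fin (m + 1) → V // G.IsGeoPath p ∧ p 0 = x},
        ‖f (p.1 (Fin.last m))‖ ^ 2) =
      ((M ^ m : ℕ) : ℝ≥0∞) * ∑' p : {p : Fin (m + 1) → V // G.IsGeoPath p ∧ p 0 = x},
        ENNReal.ofReal (‖f (p.1 (Fin.last m))‖ ^ 2) := by
    rw [ENNReal.ofReal_mul (by positivity), ENNReal.ofReal_natCast,
      ENNReal.ofReal_sum_of_nonneg (fun i _ => by positivity), tsum_fintype]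
  exact h3 ▸ ENNReal.ofReal_le_ofReal h2

lemma chain_bound (m : ℕ) {M : ℕ} (f : ℓ2 V)
    [instT : ∀ y : V, Fintype {p : Fin (m + 1) → V // G.IsGeoPath p ∧ p (Fin.last m) = y}]
    (hcardT : ∀ y : V,
      Nat.card {p : Fin (m + 1) → V // G.IsGeoPath p ∧ p (Fin.last m) = y} ≤ M ^ m) :
    ∑' x : V, ∑' p : {p : Fin (m + 1) → V // G.IsGeoPath p ∧ p 0 = x},
        ENNReal.ofReal (‖f (p.1 (Fin.last m))‖ ^ 2) ≤
      ((M ^ m : ℕ) : ℝ≥0∞) * ENNReal.ofReal (‖f‖ ^ 2) := by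
  let eS : {p : Fin (m + 1) → V // G.IsGeoPath p} ≃
      Σ x : V, {p : Fin (m + 1) → V // G.IsGeoPath p ∧ p 0 = x} :=
    { toFun := fun p => ⟨p.1 0, p.1, p.2, rfl⟩
      invFun := fun q => ⟨q.2.1, q.2.2.1⟩
      left_inv := fun p => rfl
      right_inv := fun q => by obtain ⟨x, p, hp, h0⟩ := q; subst h0; rfl }
  let eT : (Σ y : V, {p : Fin (m + 1) → V // G.IsGeoPath p ∧ p (Fin.last m) = y}) ≃
      {p : Fin (m + 1) → V // G.IsGeoPath p} :=
    { toFun := fun q => ⟨q.2.1, q.2.2.1⟩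
      invFun := fun p => ⟨p.1 (Fin.last m), p.1, p.2, rfl⟩
      left_inv := fun q => by obtain ⟨y, p, hp, h0⟩ := q; subst h0; rfl
      right_inv := fun p => rfl }
  have e1 : ∑' x : V, ∑' p : {p : Fin (m + 1) → V // G.IsGeoPath p ∧ p 0 = x},
        ENNReal.ofReal (‖f (p.1 (Fin.last m))‖ ^ 2) =
      ∑' q : Σ x : V, {p : Fin (m + 1) → V // G.IsGeoPath p ∧ p 0 = x},
        ENNReal.ofReal (‖f (q.2.1 (Fin.last m))‖ ^ 2) :=
    (ENNReal.tsum_sigma'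
      (fun q : Σ x : V, {p : Fin (m + 1) → V // G.IsGeoPath p ∧ p 0 = x} =>
        ENNReal.ofReal (‖f (q.2.1 (Fin.last m))‖ ^ 2))).symm
  have e2 : ∑' q : Σ x : V, {p : Fin (m + 1) → V // G.IsGeoPath p ∧ p 0 = x},
        ENNReal.ofReal (‖f (q.2.1 (Fin.last m))‖ ^ 2) =
      ∑' p : {p : Fin (m + 1) → V // G.IsGeoPath p},
        ENNReal.ofReal (‖f (p.1 (Fin.last m))‖ ^ 2) :=
    (Equiv.tsum_eq eS
      (fun q : Σ x : V, {p : Fin (m + 1) → V // G.IsGeoPath p ∧ p 0 = x} =>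
        ENNReal.ofReal (‖f (q.2.1 (Fin.last m))‖ ^ 2))).symm
  have e3 : ∑' q : Σ y : V, {p : Fin (m + 1) → V // G.IsGeoPath p ∧ p (Fin.last m) = y},
        ENNReal.ofReal (‖f (q.2.1 (Fin.last m))‖ ^ 2) =
      ∑' p : {p : Fin (m + 1) → V // G.IsGeoPath p},
        ENNReal.ofReal (‖f (p.1 (Fin.last m))‖ ^ 2) :=
    Equiv.tsum_eq eT
      (fun p : {p : Fin (m + 1) → V // G.IsGeoPath p} =>
        ENNReal.ofReal (‖f (p.1 (Fin.last m))‖ ^ 2))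
  have e4 : ∑' q : Σ y : V, {p : Fin (m + 1) → V // G.IsGeoPath p ∧ p (Fin.last m) = y},
        ENNReal.ofReal (‖f (q.2.1 (Fin.last m))‖ ^ 2) =
      ∑' q : Σ y : V, {p : Fin (m + 1) → V // G.IsGeoPath p ∧ p (Fin.last m) = y},
        ENNReal.ofReal (‖f q.1‖ ^ 2) :=
    tsum_congr fun q => by rw [q.2.2.2]
  have e5 : ∑' q : Σ y : V, {p : Fin (m + 1) → V // G.IsGeoPath p ∧ p (Fin.last m) = y},
        ENNReal.ofReal (‖f q.1‖ ^ 2) =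
      ∑' y : V,
        ((Nat.card {p : Fin (m + 1) → V // G.IsGeoPath p ∧ p (Fin.last m) = y} : ℕ) : ℝ≥0∞)
          * ENNReal.ofReal (‖f y‖ ^ 2) := by
    rw [ENNReal.tsum_sigma'
      (fun q : Σ y : V, {p : Fin (m + 1) → V // G.IsGeoPath p ∧ p (Fin.last m) = y} =>
        ENNReal.ofReal (‖f q.1‖ ^ 2))]
    refine tsum_congr fun y => ?_
    rw [tsum_fintype]
    simp [Finset.sum_const, Nat.card_eq_fintype_card, nsmul_eq_mul]
  have e6 : ∑' y : V,
        ((Nat.card {p : Fin (m + 1) → V // G.IsGeoPath p ∧ p (Fin.last m) = y} : ℕ) : ℝ≥0∞)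
          * ENNReal.ofReal (‖f y‖ ^ 2) ≤
      ∑' y : V, ((M ^ m : ℕ) : ℝ≥0∞) * ENNReal.ofReal (‖f y‖ ^ 2) :=
    ENNReal.tsum_le_tsum fun y => mul_le_mul_left (by exact_mod_cast hcardT y) _
  have e7 : ∑' y : V, ((M ^ m : ℕ) : ℝ≥0∞) * ENNReal.ofReal (‖f y‖ ^ 2) =
      ((M ^ m : ℕ) : ℝ≥0∞) * ENNReal.ofReal (‖f‖ ^ 2) := by
    rw [ENNReal.tsum_mul_left, l2_tsum_sq f]
  rw [e1, e2, ← e3, e4]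
  rw [e5]
  exact le_trans e6 (le_of_eq e7)

end Analysis

end CNB

/-- With `M = sup_x deg(x)` and `α = (M + √(M² + 4M))/2`, one has
`‖C_m‖ ≤ α^m` for all `m ≥ 0`. -/
theorem C_norm_bound {V : Type} (G : SimpleGraph V) [Countable V]
    (hconn : G.Connected)
    (hfin : ∀ v : V, (G.neighborSet v).Finite)
    (hbd : ∃ M₀ : ℕ, ∀ v : V, G.gdeg v ≤ M₀)
    (hdeg1 : ∀ v : V, G.gdeg v ≠ 1)
    (M : ℕ) (hM : M = sSup (Set.range fun v : V => G.gdeg v))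
    (C : ℕ → (ℓ2 V →L[ℂ] ℓ2 V)) (hC : G.IsGeoCountOp C) :
    ∀ m : ℕ, ‖C m‖ ≤ (((M : ℝ) + Real.sqrt ((M : ℝ) ^ 2 + 4 * M)) / 2) ^ m := by
  intro m
  -- reduce to the bound `‖C m‖ ≤ M ^ m`
  have hα : (M : ℝ) ≤ ((M : ℝ) + Real.sqrt ((M : ℝ) ^ 2 + 4 * M)) / 2 := by
    have h1 : (M : ℝ) = Real.sqrt ((M : ℝ) ^ 2) := (Real.sqrt_sq (by positivity)).symm
    have h2 : Real.sqrt ((M : ℝ) ^ 2) ≤ Real.sqrt ((M : ℝ) ^ 2 + 4 * M) :=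
      Real.sqrt_le_sqrt (by
        have h4 : (0:ℝ) ≤ 4 * (M:ℝ) := by positivity
        linarith)
    nlinarith [h1, h2]
  refine le_trans ?_ (pow_le_pow_left₀ (Nat.cast_nonneg M) hα m)
  -- degrees are bounded by M
  have hdegM : ∀ v : V, G.gdeg v ≤ M := by
    intro v
    rw [hM]
    refine le_csSup ⟨hbd.choose, ?_⟩ ⟨v, rfl⟩
    rintro _ ⟨w, rfl⟩
    exact hbd.choose_spec w
  -- embeddings of neighbor sets into `Fin M`
  let ι : ∀ v : V, G.neighborSet v ↪ Fin M :=
    fun v => (CNB.neighbor_embed (hfin v) (hdegM v)).some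
  -- finiteness and cardinality bounds for path sets
  haveI hFinF : ∀ x : V, Finite {p : Fin (m + 1) → V // G.IsGeoPath p ∧ p 0 = x} := by
    intro x
    obtain ⟨F, hF⟩ := CNB.exists_inj_pathsFrom ι m x
    exact Finite.of_injective F hF
  have hcardF : ∀ x : V,
      Nat.card {p : Fin (m + 1) → V // G.IsGeoPath p ∧ p 0 = x} ≤ M ^ m := by
    intro x
    obtain ⟨F, hF⟩ := CNB.exists_inj_pathsFrom ι m x
    calc Nat.card {p : Fin (m + 1) → V // G.IsGeoPath p ∧ p 0 = x}
        ≤ Nat.card (Fin m → Fin M) := Nat.card_le_card_of_injective F hF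
      _ = M ^ m := by simp [Nat.card_eq_fintype_card]
  haveI hFinT : ∀ y : V,
      Finite {p : Fin (m + 1) → V // G.IsGeoPath p ∧ p (Fin.last m) = y} := by
    intro y
    obtain ⟨F, hF⟩ := CNB.exists_inj_pathsTo (G := G) m y
    exact Finite.of_injective F hF
  have hcardT : ∀ y : V,
      Nat.card {p : Fin (m + 1) → V // G.IsGeoPath p ∧ p (Fin.last m) = y} ≤ M ^ m := by
    intro y
    obtain ⟨F, hF⟩ := CNB.exists_inj_pathsTo (G := G) m y
    exact le_trans (Nat.card_le_card_of_injective F hF) (hcardF y)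
  -- the operator norm bound
  refine (C m).opNorm_le_bound (by positivity) (fun f => ?_)
  letI instF : ∀ x : V, Fintype {p : Fin (m + 1) → V // G.IsGeoPath p ∧ p 0 = x} :=
    fun x => Fintype.ofFinite _
  letI instT : ∀ y : V, Fintype {p : Fin (m + 1) → V // G.IsGeoPath p ∧ p (Fin.last m) = y} :=
    fun y => Fintype.ofFinite _
  have hchain : ENNReal.ofReal (‖C m f‖ ^ 2) ≤
      ((M ^ m : ℕ) : ℝ≥0∞) * (((M ^ m : ℕ) : ℝ≥0∞) * ENNReal.ofReal (‖f‖ ^ 2)) := by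
    calc ENNReal.ofReal (‖C m f‖ ^ 2) = ∑' x, ENNReal.ofReal (‖C m f x‖ ^ 2) :=
          (CNB.l2_tsum_sq (C m f)).symm
      _ ≤ ∑' x, (((M ^ m : ℕ) : ℝ≥0∞) *
            ∑' p : {p : Fin (m + 1) → V // G.IsGeoPath p ∧ p 0 = x},
              ENNReal.ofReal (‖f (p.1 (Fin.last m))‖ ^ 2)) :=
          ENNReal.tsum_le_tsum fun x =>
            CNB.step_bound m f x (hcardF x) (C m f x)
              ((hC m f x).trans (finsum_eq_sum_of_fintype _))
      _ = ((M ^ m : ℕ) : ℝ≥0∞) * ∑' x : V,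
            ∑' p : {p : Fin (m + 1) → V // G.IsGeoPath p ∧ p 0 = x},
              ENNReal.ofReal (‖f (p.1 (Fin.last m))‖ ^ 2) := ENNReal.tsum_mul_left
      _ ≤ ((M ^ m : ℕ) : ℝ≥0∞) * (((M ^ m : ℕ) : ℝ≥0∞) * ENNReal.ofReal (‖f‖ ^ 2)) :=
          mul_le_mul_right (CNB.chain_bound m f hcardT) _
  have hRHS : (((M : ℝ) ^ m * ‖f‖) ^ 2) = ((M ^ m : ℕ) : ℝ) * (((M ^ m : ℕ) : ℝ) * ‖f‖ ^ 2) := by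
    push_cast
    ring
  have hfinal : ENNReal.ofReal (‖C m f‖ ^ 2) ≤ ENNReal.ofReal (((M : ℝ) ^ m * ‖f‖) ^ 2) := by
    rw [hRHS, ENNReal.ofReal_mul (by positivity), ENNReal.ofReal_mul (by positivity),
      ENNReal.ofReal_natCast]
    exact hchain
  have hsq : ‖C m f‖ ^ 2 ≤ ((M : ℝ) ^ m * ‖f‖) ^ 2 :=
    (ENNReal.ofReal_le_ofReal_iff (by positivity)).1 hfinal
  have := Real.sqrt_le_sqrt hsq
  rwa [Real.sqrt_sq (norm_nonneg _), Real.sqrt_sq (by positivity)] at this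
end
end

section
/- Let A and Q be bounded operators on a Hilbert space, set f(u) = Au − Qu² and f′(u) = A − 2Qu for u ∈ ℂ. Then for every integer n ≥ 1, Σ_{j=0}^{n−1} f(u)^j f′(u) f(u)^{n−1−j} = n·f′(u)f(u)^{n−1} + u²·Σ_{j=1}^{n−1} j·f(u)^{n−1−j}[Q, A]f(u)^{j−1}, where [Q, A] = QA − AQ. -/
private lemma pow_mul_comm_aux {R : Type*} [Ring R] (a b c : R)
    (h : a * b = b * a + c) (n : ℕ) :
    a ^ n * b = b * a ^ n + ∑ k ∈ Finset.range n, a ^ k * c * a ^ (n - 1 - k) := by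
  induction n with
  | zero => simp
  | succ n ih =>
    have e0 : a ^ (n + 1) * b = a ^ n * (a * b) := by rw [pow_succ, mul_assoc]
    rw [e0, h, mul_add, ← mul_assoc, ih, add_mul, Finset.sum_range_succ]
    have h1 : ∀ k ∈ Finset.range n, a ^ k * c * a ^ (n - 1 - k) * a
        = a ^ k * c * a ^ (n + 1 - 1 - k) := by
      intro k hk
      rw [Finset.mem_range] at hk
      rw [show n + 1 - 1 - k = (n - 1 - k) + 1 from by omega, pow_succ, ← mul_assoc]
    rw [Finset.sum_mul, Finset.sum_congr rfl h1]
    simp only [Nat.add_sub_cancel, Nat.sub_self, pow_zero, mul_one]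
    rw [pow_succ, ← mul_assoc]
    abel

private lemma sum_conj_aux {R : Type*} [Ring R] (a b c : R)
    (h : a * b = b * a + c) (m : ℕ) :
    ∑ j ∈ Finset.range (m + 1), a ^ j * b * a ^ (m - j)
      = (m + 1) • (b * a ^ m) +
        ∑ j ∈ Finset.range m, (j + 1) • (a ^ (m - 1 - j) * c * a ^ j) := by
  induction m with
  | zero => simp
  | succ m ih =>
    rw [Finset.sum_range_succ]
    have h1 : ∀ j ∈ Finset.range (m + 1), a ^ j * b * a ^ (m + 1 - j)
        = a ^ j * b * a ^ (m - j) * a := by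
      intro j hj
      rw [Finset.mem_range] at hj
      rw [show m + 1 - j = (m - j) + 1 from by omega, pow_succ, ← mul_assoc]
    rw [Finset.sum_congr rfl h1, ← Finset.sum_mul, ih, add_mul, Finset.sum_mul]
    have h2 : a ^ (m + 1) * b * a ^ (m + 1 - (m + 1))
        = b * a ^ (m + 1) + ∑ k ∈ Finset.range (m + 1), a ^ k * c * a ^ (m - k) := by
      rw [Nat.sub_self, pow_zero, mul_one, pow_mul_comm_aux a b c h]
      simp
    rw [h2]
    have h3 : ∑ k ∈ Finset.range (m + 1), a ^ k * c * a ^ (m - k)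
        = ∑ j ∈ Finset.range (m + 1), a ^ (m - j) * c * a ^ j := by
      rw [← Finset.sum_range_reflect]
      apply Finset.sum_congr rfl
      intro j hj
      rw [Finset.mem_range] at hj
      congr 2 <;> omega
    rw [h3]
    have h4 : ∑ j ∈ Finset.range (m + 1), (j + 1) • (a ^ (m + 1 - 1 - j) * c * a ^ j)
        = (∑ j ∈ Finset.range m, (j + 1) • (a ^ (m - 1 - j) * c * a ^ j) * a)
          + ∑ j ∈ Finset.range (m + 1), a ^ (m - j) * c * a ^ j := by
      simp only [Nat.add_sub_cancel, succ_nsmul]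
      rw [Finset.sum_add_distrib]
      congr 1
      · rw [Finset.sum_range_succ' (fun j => j • (a ^ (m - j) * c * a ^ j))]
        simp only [zero_smul, add_zero]
        apply Finset.sum_congr rfl
        intro j hj
        rw [Finset.mem_range] at hj
        rw [show m - (j + 1) = m - 1 - j from by omega]
        simp [add_mul, smul_mul_assoc, mul_assoc, pow_succ]
    rw [h4]
    rw [show (m + 1 + 1) • (b * a ^ (m + 1)) = (m + 1) • (b * a ^ m * a) + b * a ^ (m + 1)
      from by rw [succ_nsmul, mul_assoc, ← pow_succ]]
    simp only [smul_mul_assoc]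
    abel

/-- For bounded operators `A, Q` on a complex Hilbert space, `f(u) = uA − u²Q`,
`f′(u) = A − 2uQ`, and every `n ≥ 1`:
`Σ_{j=0}^{n−1} f(u)^j f′(u) f(u)^{n−1−j}
  = n·f′(u)f(u)^{n−1} + u²·Σ_{j=1}^{n−1} j·f(u)^{n−1−j}[Q, A]f(u)^{j−1}`,
where `[Q, A] = QA − AQ`. -/
theorem sum_conjugates_deriv (H : Type) [NormedAddCommGroup H]
    [InnerProductSpace ℂ H] [CompleteSpace H]
    (A Q : H →L[ℂ] H) (u : ℂ) (n : ℕ) (hn : 1 ≤ n) :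
    ∑ j ∈ Finset.range n,
        (u • A - u ^ 2 • Q) ^ j * (A - (2 * u) • Q) * (u • A - u ^ 2 • Q) ^ (n - 1 - j) =
      (n : ℂ) • ((A - (2 * u) • Q) * (u • A - u ^ 2 • Q) ^ (n - 1)) +
        u ^ 2 • ∑ j ∈ Finset.Icc 1 (n - 1),
          (j : ℂ) • ((u • A - u ^ 2 • Q) ^ (n - 1 - j) * (Q * A - A * Q) *
            (u • A - u ^ 2 • Q) ^ (j - 1)) := by
  obtain ⟨m, rfl⟩ : ∃ m, n = m + 1 := ⟨n - 1, by omega⟩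
  set a := u • A - u ^ 2 • Q with ha
  set b := A - (2 * u) • Q with hb
  have hc : a * b = b * a + u ^ 2 • (Q * A - A * Q) := by
    simp only [ha, hb, mul_sub, sub_mul, smul_mul_assoc, mul_smul_comm, smul_smul,
      smul_sub]
    module
  have key := sum_conj_aux a b (u ^ 2 • (Q * A - A * Q)) hc m
  simp only [Nat.add_sub_cancel]
  rw [key]
  congr 1
  · exact (Nat.cast_smul_eq_nsmul ℂ (m + 1) _).symm
  · rw [show Finset.Icc 1 m = Finset.Ico 1 (m + 1) from by rw [Finset.Ico_add_one_right_eq_Icc],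
      Finset.sum_Ico_eq_sum_range, Finset.smul_sum]
    simp only [Nat.add_sub_cancel]
    apply Finset.sum_congr rfl
    intro j hj
    rw [Finset.mem_range] at hj
    rw [show m - (1 + j) = m - 1 - j from by omega, show 1 + j - 1 = j from by omega]
    rw [mul_smul_comm, smul_mul_assoc, ← Nat.cast_smul_eq_nsmul ℂ (j + 1), smul_comm]
    rw [Nat.add_comm 1 j]
end
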